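/- arXiv:1307.8291 — 5 statements merged into one kernel-verified Lean document; each statement's English description precedes it below -/
import Mathlib

section
/- Let f : I ⊂ [0,∞) → ℝ be differentiable on I°, m ∈ (0,1], ma, b ∈ I° with a < b, and suppose f' is integrable on [ma, mb]. Suppose |f'|^q is (α,m)-convex on [ma,b] for some fixed q ≥ 1 and (α,m) ∈ [0,1]², and |f'(u)| ≤ M for all u ∈ [ma,b]. Then for every x ∈ [a,b] and θ > 0 the Ostrowski-type inequality holds: |((x−a)^θ + (b−x)^θ)/(b−a) · f(mx) − (Γ(θ+1)/(m^θ (b−a))) [J_{(mx)−}^θ f(ma) + J_{(mx)+}^θ f(mb)]| ≤ m M (1/(θ+1)) ((αm+θ+1)/(α+θ+1))^{1/q} · ((x−a)^{θ+1} + (b−x)^{θ+1})/(b−a). -/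
open MeasureTheory Set intervalIntegral Real

lemma integral_sub_rpow_left (c d β : ℝ) (hβ : -1 < β) :
    ∫ u in c..d, (u - c) ^ β = (d - c) ^ (β + 1) / (β + 1) := by
  rw [intervalIntegral.integral_comp_sub_right (fun x => x ^ β) c, sub_self,
    integral_rpow (Or.inl hβ), Real.zero_rpow (by linarith : β + 1 ≠ 0)]
  ring

lemma integral_sub_rpow_right (c d β : ℝ) (hβ : -1 < β) :
    ∫ u in c..d, (d - u) ^ β = (d - c) ^ (β + 1) / (β + 1) := by
  rw [intervalIntegral.integral_comp_sub_left (fun x => x ^ β) d, sub_self,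
    integral_rpow (Or.inl hβ), Real.zero_rpow (by linarith : β + 1 ≠ 0)]
  ring


lemma intervalIntegrable_sub_rpow_left (c d β : ℝ) (hβ : -1 < β) :
    IntervalIntegrable (fun u => (u - c) ^ β) volume c d := by
  have := (intervalIntegrable_rpow' hβ (a := 0) (b := d - c)).comp_sub_right c
  simpa using this

lemma intervalIntegrable_sub_rpow_right (c d β : ℝ) (hβ : -1 < β) :
    IntervalIntegrable (fun u => (d - u) ^ β) volume c d := by
  have := (intervalIntegrable_rpow' hβ (a := d - c) (b := 0)).comp_sub_left d
  simpa using this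

lemma ibp_left (f f' : ℝ → ℝ) (c d θ : ℝ) (hθ : 0 < θ) (hcd : c ≤ d)
    (hfd : ∀ u ∈ Icc c d, HasDerivAt f (f' u) u)
    (hint : IntervalIntegrable f' volume c d) :
    (d - c) ^ θ * f d = θ * (∫ u in c..d, (u - c) ^ (θ - 1) * f u)
      + ∫ u in c..d, (u - c) ^ θ * f' u := by
  have hcontf : ContinuousOn f (Icc c d) := fun u hu => ((hfd u hu).continuousAt).continuousWithinAt
  have hw : Continuous fun u : ℝ => (u - c) ^ θ :=
    (continuous_id.sub continuous_const).rpow_const (fun u => Or.inr hθ.le)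
  have hF : ContinuousOn (fun u => (u - c) ^ θ * f u) (Icc c d) := hw.continuousOn.mul hcontf
  have huIcc : Set.uIcc c d = Icc c d := uIcc_of_le hcd
  have hi1 : IntervalIntegrable (fun u => θ * ((u - c) ^ (θ - 1) * f u)) volume c d := by
    have := ((intervalIntegrable_sub_rpow_left c d (θ - 1) (by linarith)).mul_continuousOn
      (huIcc ▸ hcontf)).const_mul θ
    simpa [mul_assoc] using this
  have hi2 : IntervalIntegrable (fun u => (u - c) ^ θ * f' u) volume c d :=
    hint.continuousOn_mul hw.continuousOn
  have hderiv : ∀ u ∈ Ioo c d, HasDerivWithinAt (fun u => (u - c) ^ θ * f u)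
      (θ * ((u - c) ^ (θ - 1) * f u) + (u - c) ^ θ * f' u) (Ioi u) u := by
    intro u hu
    have h1 : HasDerivAt (fun y : ℝ => (y - c) ^ θ) (1 * θ * (u - c) ^ (θ - 1)) u :=
      ((hasDerivAt_id u).sub_const c).rpow_const (Or.inl (ne_of_gt (sub_pos.2 hu.1)))
    have h2 := h1.mul (hfd u (Ioo_subset_Icc_self hu))
    have h3 : HasDerivAt (fun u => (u - c) ^ θ * f u)
        (θ * ((u - c) ^ (θ - 1) * f u) + (u - c) ^ θ * f' u) u := by
      rw [show θ * ((u - c) ^ (θ - 1) * f u) + (u - c) ^ θ * f' u =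
        1 * θ * (u - c) ^ (θ - 1) * f u + (u - c) ^ θ * f' u by ring]; exact h2
    exact h3.hasDerivWithinAt
  have hftc := intervalIntegral.integral_eq_sub_of_hasDeriv_right_of_le hcd hF hderiv
    (hi1.add hi2)
  rw [intervalIntegral.integral_add hi1 hi2, intervalIntegral.integral_const_mul] at hftc
  rw [sub_self, Real.zero_rpow hθ.ne', zero_mul, sub_zero] at hftc
  linarith

lemma ibp_right (f f' : ℝ → ℝ) (c d θ : ℝ) (hθ : 0 < θ) (hcd : c ≤ d)
    (hfd : ∀ u ∈ Icc c d, HasDerivAt f (f' u) u)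
    (hint : IntervalIntegrable f' volume c d) :
    (d - c) ^ θ * f c = θ * (∫ u in c..d, (d - u) ^ (θ - 1) * f u)
      - ∫ u in c..d, (d - u) ^ θ * f' u := by
  have hcontf : ContinuousOn f (Icc c d) := fun u hu => ((hfd u hu).continuousAt).continuousWithinAt
  have hw : Continuous fun u : ℝ => (d - u) ^ θ :=
    (continuous_const.sub continuous_id).rpow_const (fun u => Or.inr hθ.le)
  have hF : ContinuousOn (fun u => (d - u) ^ θ * f u) (Icc c d) := hw.continuousOn.mul hcontf
  have huIcc : Set.uIcc c d = Icc c d := uIcc_of_le hcd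
  have hi1 : IntervalIntegrable (fun u => θ * ((d - u) ^ (θ - 1) * f u)) volume c d := by
    have := ((intervalIntegrable_sub_rpow_right c d (θ - 1) (by linarith)).mul_continuousOn
      (huIcc ▸ hcontf)).const_mul θ
    simpa [mul_assoc] using this
  have hi2 : IntervalIntegrable (fun u => (d - u) ^ θ * f' u) volume c d :=
    hint.continuousOn_mul hw.continuousOn
  have hderiv : ∀ u ∈ Ioo c d, HasDerivWithinAt (fun u => (d - u) ^ θ * f u)
      ((d - u) ^ θ * f' u - θ * ((d - u) ^ (θ - 1) * f u)) (Ioi u) u := by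
    intro u hu
    have h1 : HasDerivAt (fun y : ℝ => (d - y) ^ θ) (-1 * θ * (d - u) ^ (θ - 1)) u :=
      ((hasDerivAt_id u).const_sub d).rpow_const (Or.inl (ne_of_gt (sub_pos.2 hu.2)))
    have h2 := h1.mul (hfd u (Ioo_subset_Icc_self hu))
    have h3 : HasDerivAt (fun u => (d - u) ^ θ * f u)
        ((d - u) ^ θ * f' u - θ * ((d - u) ^ (θ - 1) * f u)) u := by
      rw [show (d - u) ^ θ * f' u - θ * ((d - u) ^ (θ - 1) * f u) =
        -1 * θ * (d - u) ^ (θ - 1) * f u + (d - u) ^ θ * f' u by ring]; exact h2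
    exact h3.hasDerivWithinAt
  have hftc := intervalIntegral.integral_eq_sub_of_hasDeriv_right_of_le hcd hF hderiv
    (hi2.sub hi1)
  rw [intervalIntegral.integral_sub hi2 hi1, intervalIntegral.integral_const_mul] at hftc
  rw [sub_self, Real.zero_rpow hθ.ne', zero_mul, zero_sub] at hftc
  linarith

lemma key_bound (c d θ α mm q M : ℝ) (ρ g : ℝ → ℝ)
    (hθ : 0 < θ) (hα0 : 0 ≤ α) (hq : 1 ≤ q) (hmm0 : 0 < mm) (hmm1 : mm ≤ 1) (hM : 0 ≤ M)
    (hcd : c ≤ d)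
    (hρc : Continuous ρ)
    (hρn : ∀ u ∈ Icc c d, 0 ≤ ρ u ∧ ρ u ≤ d - c)
    (hρp : ∀ u ∈ Ioo c d, 0 < ρ u)
    (hρ1 : ∫ u in c..d, ρ u ^ θ = (d - c) ^ (θ + 1) / (θ + 1))
    (hρ2 : ∫ u in c..d, ρ u ^ (θ + α) = (d - c) ^ (θ + α + 1) / (θ + α + 1))
    (hg : AEStronglyMeasurable g (volume.restrict (Ioc c d)))
    (hg0 : ∀ u, 0 ≤ g u)
    (hgq : ∀ u ∈ Ioc c d, g u ^ q ≤ M ^ q * (mm + (1 - mm) * (ρ u / (d - c)) ^ α)) :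
    ∫ u in c..d, ρ u ^ θ * g u ≤
      M * ((d - c) ^ (θ + 1) / (θ + 1)) * ((α * mm + θ + 1) / (α + θ + 1)) ^ (1 / q) := by
  have hq0 : (0:ℝ) < q := lt_of_lt_of_le one_pos hq
  rcases eq_or_lt_of_le hcd with rfl | hlt
  · rw [intervalIntegral.integral_same, sub_self, Real.zero_rpow (by positivity)]
    simp
  have hL : (0:ℝ) < d - c := sub_pos.2 hlt
  set L := d - c with hLdef
  have hKnn : (0:ℝ) ≤ (α * mm + θ + 1) / (α + θ + 1) := by positivity
  -- the dominating function is continuous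
  have hdomc : Continuous fun u => ρ u ^ θ * (M ^ q * (mm + (1 - mm) * (ρ u / L) ^ α)) := by
    have h1 : Continuous fun u => ρ u ^ θ := hρc.rpow_const fun u => Or.inr hθ.le
    have h2 : Continuous fun u => (ρ u / L) ^ α :=
      (hρc.div_const L).rpow_const fun u => Or.inr hα0
    continuity
  -- step B : comparison of ∫ ρ^θ g^q with the explicit integral
  have hcomp : ∫ u in c..d, ρ u ^ θ * g u ^ q ≤
      ∫ u in c..d, ρ u ^ θ * (M ^ q * (mm + (1 - mm) * (ρ u / L) ^ α)) := by
    rw [intervalIntegral.integral_of_le hcd, intervalIntegral.integral_of_le hcd]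
    refine integral_mono_of_nonneg ?_ (hdomc.integrableOn_Ioc) ?_
    · filter_upwards [ae_restrict_mem measurableSet_Ioc] with u hu
      exact mul_nonneg (Real.rpow_nonneg (hρn u (Ioc_subset_Icc_self hu)).1 _)
        (Real.rpow_nonneg (hg0 u) _)
    · filter_upwards [ae_restrict_mem measurableSet_Ioc] with u hu
      exact mul_le_mul_of_nonneg_left (hgq u hu)
        (Real.rpow_nonneg (hρn u (Ioc_subset_Icc_self hu)).1 _)
  have hcalc : ∫ u in c..d, ρ u ^ θ * (M ^ q * (mm + (1 - mm) * (ρ u / L) ^ α)) =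
      M ^ q * L ^ (θ + 1) * ((α * mm + θ + 1) / ((θ + 1) * (α + θ + 1))) := by
    have hpt : EqOn (fun u => ρ u ^ θ * (M ^ q * (mm + (1 - mm) * (ρ u / L) ^ α)))
        (fun u => (M ^ q * mm) * ρ u ^ θ + (M ^ q * (1 - mm) / L ^ α) * ρ u ^ (θ + α))
        (Set.uIcc c d) := by
      intro u hu
      rw [Set.uIcc_of_le hcd] at hu
      have h0 : 0 ≤ ρ u := (hρn u hu).1
      have hdiv : (ρ u / L) ^ α = ρ u ^ α / L ^ α := Real.div_rpow h0 hL.le α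
      have hadd : ρ u ^ (θ + α) = ρ u ^ θ * ρ u ^ α :=
        Real.rpow_add' h0 (by positivity)
      simp only
      rw [hdiv, hadd]
      have hLα : (0:ℝ) < L ^ α := Real.rpow_pos_of_pos hL α
      field_simp
    rw [intervalIntegral.integral_congr hpt]
    have hi1 : IntervalIntegrable (fun u => ρ u ^ θ) volume c d :=
      (hρc.rpow_const fun u => Or.inr hθ.le).intervalIntegrable c d
    have hi2 : IntervalIntegrable (fun u => ρ u ^ (θ + α)) volume c d :=
      (hρc.rpow_const fun u => Or.inr (by positivity)).intervalIntegrable c d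
    rw [intervalIntegral.integral_add (hi1.const_mul _) (hi2.const_mul _),
      intervalIntegral.integral_const_mul, intervalIntegral.integral_const_mul, hρ1, hρ2]
    have hLθα : L ^ (θ + α + 1) = L ^ (θ + 1) * L ^ α := by
      rw [← Real.rpow_add hL]; ring_nf
    rw [hLθα]
    have hLα : (0:ℝ) < L ^ α := Real.rpow_pos_of_pos hL α
    field_simp
    ring
  have hB : ∫ u in c..d, ρ u ^ θ * g u ^ q ≤
      M ^ q * L ^ (θ + 1) * ((α * mm + θ + 1) / ((θ + 1) * (α + θ + 1))) := hcomp.trans_eq hcalc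
  rcases eq_or_lt_of_le hq with hq1 | hq1
  · -- q = 1
    subst hq1
    simp only [Real.rpow_one] at hB ⊢
    refine hB.trans (le_of_eq ?_)
    rw [div_one, Real.rpow_one]
    field_simp
  -- q > 1 : Hölder
  have hIoc : MeasurableSet (Ioc c d) := measurableSet_Ioc
  haveI : IsFiniteMeasure (volume.restrict (Ioc c d)) :=
    ⟨by rw [Measure.restrict_apply_univ]; exact measure_Ioc_lt_top⟩
  set p := Real.conjExponent q with hpdef
  have hpq : p.HolderConjugate q := (Real.HolderConjugate.conjExponent hq1).symm
  have hp1 : 1 < p := hpq.lt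
  have hp0 : p ≠ 0 := hpq.ne_zero
  have hq0' : q ≠ 0 := hq0.ne'
  set F := fun u => ρ u ^ (θ / p) with hFdef
  set G := fun u => ρ u ^ (θ / q) * g u with hGdef
  have hFc : Continuous F := hρc.rpow_const fun u => Or.inr (by positivity)
  have hGm : AEStronglyMeasurable G (volume.restrict (Ioc c d)) :=
    ((hρc.rpow_const fun u => Or.inr (by positivity)).aestronglyMeasurable).mul hg
  have hgM : ∀ u ∈ Ioc c d, g u ≤ M := by
    intro u hu
    have h1 := hgq u hu
    have hs0 : 0 ≤ (ρ u / L) ^ α :=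
      Real.rpow_nonneg (div_nonneg (hρn u (Ioc_subset_Icc_self hu)).1 hL.le) α
    have hs1 : (ρ u / L) ^ α ≤ 1 :=
      Real.rpow_le_one (div_nonneg (hρn u (Ioc_subset_Icc_self hu)).1 hL.le) (by
        rw [div_le_one hL]; exact (hρn u (Ioc_subset_Icc_self hu)).2) hα0
    have hfac : mm + (1 - mm) * (ρ u / L) ^ α ≤ 1 := by nlinarith
    have h2 : g u ^ q ≤ M ^ q := h1.trans (by nlinarith [Real.rpow_nonneg hM q])
    have h3 : (g u ^ q) ^ q⁻¹ ≤ (M ^ q) ^ q⁻¹ :=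
      Real.rpow_le_rpow (Real.rpow_nonneg (hg0 u) q) h2 (by positivity)
    rwa [← Real.rpow_mul (hg0 u), ← Real.rpow_mul hM, mul_inv_cancel₀ hq0', Real.rpow_one,
      Real.rpow_one] at h3
  have hFb : MemLp F (ENNReal.ofReal p) (volume.restrict (Ioc c d)) := by
    refine MemLp.of_bound hFc.aestronglyMeasurable (L ^ (θ / p)) ?_
    filter_upwards [ae_restrict_mem hIoc] with u hu
    have h0 : 0 ≤ ρ u := (hρn u (Ioc_subset_Icc_self hu)).1
    rw [Real.norm_eq_abs, abs_of_nonneg (Real.rpow_nonneg h0 _)]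
    exact Real.rpow_le_rpow h0 (hρn u (Ioc_subset_Icc_self hu)).2 (by positivity)
  have hGb : MemLp G (ENNReal.ofReal q) (volume.restrict (Ioc c d)) := by
    refine MemLp.of_bound hGm (L ^ (θ / q) * M) ?_
    filter_upwards [ae_restrict_mem hIoc] with u hu
    have h0 : 0 ≤ ρ u := (hρn u (Ioc_subset_Icc_self hu)).1
    rw [Real.norm_eq_abs, abs_of_nonneg (mul_nonneg (Real.rpow_nonneg h0 _) (hg0 u))]
    exact mul_le_mul (Real.rpow_le_rpow h0 (hρn u (Ioc_subset_Icc_self hu)).2 (by positivity))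
      (hgM u hu) (hg0 u) (Real.rpow_nonneg hL.le _)
  have hF0 : 0 ≤ᵐ[volume.restrict (Ioc c d)] F := by
    filter_upwards [ae_restrict_mem hIoc] with u hu
    exact Real.rpow_nonneg (hρn u (Ioc_subset_Icc_self hu)).1 _
  have hG0 : 0 ≤ᵐ[volume.restrict (Ioc c d)] G := by
    filter_upwards [ae_restrict_mem hIoc] with u hu
    exact mul_nonneg (Real.rpow_nonneg (hρn u (Ioc_subset_Icc_self hu)).1 _) (hg0 u)
  have hHolder := integral_mul_le_Lp_mul_Lq_of_nonneg hpq hF0 hG0 hFb hGb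
  have hθpq : θ / p + θ / q = θ := by
    rw [div_eq_mul_inv, div_eq_mul_inv, ← mul_add, hpq.inv_add_inv_eq_one, mul_one]
  have hne : ∀ᵐ u ∂(volume.restrict (Ioc c d)), u ≠ d := by
    refine ae_restrict_of_ae ?_
    simp only [ae_iff, not_not]
    have hset : {u : ℝ | u = d} = {d} := by ext; simp
    rw [hset]; exact measure_singleton d
  have hFG : ∫ u in Ioc c d, F u * G u = ∫ u in c..d, ρ u ^ θ * g u := by
    rw [intervalIntegral.integral_of_le hcd]
    refine integral_congr_ae ?_
    filter_upwards [ae_restrict_mem hIoc, hne] with u hu hud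
    have hρpos := hρp u ⟨hu.1, lt_of_le_of_ne hu.2 hud⟩
    simp only [hFdef, hGdef]
    rw [← mul_assoc, ← Real.rpow_add hρpos, hθpq]
  have hFp : ∫ u in Ioc c d, F u ^ p = L ^ (θ + 1) / (θ + 1) := by
    rw [← hρ1, intervalIntegral.integral_of_le hcd]
    refine integral_congr_ae ?_
    filter_upwards [ae_restrict_mem hIoc] with u hu
    have h0 : 0 ≤ ρ u := (hρn u (Ioc_subset_Icc_self hu)).1
    simp only [hFdef]
    rw [← Real.rpow_mul h0, div_mul_cancel₀ θ hp0]
  have hGq : ∫ u in Ioc c d, G u ^ q ≤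
      M ^ q * L ^ (θ + 1) * ((α * mm + θ + 1) / ((θ + 1) * (α + θ + 1))) := by
    refine le_trans (le_of_eq ?_) hB
    rw [intervalIntegral.integral_of_le hcd]
    refine integral_congr_ae ?_
    filter_upwards [ae_restrict_mem hIoc] with u hu
    have h0 : 0 ≤ ρ u := (hρn u (Ioc_subset_Icc_self hu)).1
    simp only [hGdef]
    rw [Real.mul_rpow (Real.rpow_nonneg h0 _) (hg0 u), ← Real.rpow_mul h0,
      div_mul_cancel₀ θ hq0']
  have hGq0 : 0 ≤ ∫ u in Ioc c d, G u ^ q := by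
    refine integral_nonneg_of_ae ?_
    filter_upwards [ae_restrict_mem hIoc] with u hu
    exact Real.rpow_nonneg (mul_nonneg (Real.rpow_nonneg
      (hρn u (Ioc_subset_Icc_self hu)).1 _) (hg0 u)) q
  rw [hFG, hFp] at hHolder
  have hW : (0:ℝ) < L ^ (θ + 1) / (θ + 1) := by positivity
  set W := L ^ (θ + 1) / (θ + 1) with hWdef
  have hstep : (∫ u in Ioc c d, G u ^ q) ^ (1 / q) ≤
      (M ^ q * W * ((α * mm + θ + 1) / (α + θ + 1))) ^ (1 / q) := by
    refine Real.rpow_le_rpow hGq0 (hGq.trans (le_of_eq ?_)) (by positivity)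
    rw [hWdef]
    field_simp
  have hfinal : ∫ u in c..d, ρ u ^ θ * g u ≤
      W ^ (1 / p) * (M ^ q * W * ((α * mm + θ + 1) / (α + θ + 1))) ^ (1 / q) :=
    hHolder.trans (mul_le_mul_of_nonneg_left hstep (Real.rpow_nonneg hW.le _))
  refine hfinal.trans (le_of_eq ?_)
  rw [Real.mul_rpow (by positivity) hKnn, Real.mul_rpow (by positivity) hW.le,
    ← Real.rpow_mul hM]
  rw [mul_one_div, div_self hq0', Real.rpow_one]
  have hWW : W ^ (1 / p) * W ^ (1 / q) = W := by
    rw [← Real.rpow_add hW, one_div, one_div, hpq.inv_add_inv_eq_one, Real.rpow_one]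
  calc W ^ (1 / p) * (M * W ^ (1 / q) * ((α * mm + θ + 1) / (α + θ + 1)) ^ (1 / q))
      = M * (W ^ (1 / p) * W ^ (1 / q)) * ((α * mm + θ + 1) / (α + θ + 1)) ^ (1 / q) := by ring
    _ = M * W * ((α * mm + θ + 1) / (α + θ + 1)) ^ (1 / q) := by rw [hWW]



/-- Riemann-Liouville fractional integral `J_{d^-}^θ f(c) = (1/Γ(θ)) ∫_c^d (t-c)^(θ-1) f(t) dt`. -/
noncomputable def rlLeft (θ c d : ℝ) (f : ℝ → ℝ) : ℝ :=
  (1 / Real.Gamma θ) * ∫ t in c..d, (t - c) ^ (θ - 1) * f t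

/-- Riemann-Liouville fractional integral `J_{c^+}^θ f(d) = (1/Γ(θ)) ∫_c^d (d-t)^(θ-1) f(t) dt`. -/
noncomputable def rlRight (θ c d : ℝ) (f : ℝ → ℝ) : ℝ :=
  (1 / Real.Gamma θ) * ∫ t in c..d, (d - t) ^ (θ - 1) * f t

/-- The quantity `S_f(mx, λ, θ, ma, mb)` from the paper. -/
noncomputable def Sf (f : ℝ → ℝ) (m a b x lam θ : ℝ) : ℝ :=
  (1 - lam) * m ^ (θ - 1) * (((x - a) ^ θ + (b - x) ^ θ) / (b - a)) * f (m * x)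
  + lam * m ^ (θ - 1) * (((x - a) ^ θ * f (m * a) + (b - x) ^ θ * f (m * b)) / (b - a))
  - Real.Gamma (θ + 1) / (m * (b - a)) *
      (rlLeft θ (m * a) (m * x) f + rlRight θ (m * x) (m * b) f)

/-- `(α,m)`-convexity of `g` on the interval `[c,d]`. -/
def AlphaMConvexOn (α m c d : ℝ) (g : ℝ → ℝ) : Prop :=
  ∀ u ∈ Set.Icc c d, ∀ v ∈ Set.Icc c d, ∀ t ∈ Set.Icc (0:ℝ) 1,
    t * u + m * (1 - t) * v ∈ Set.Icc c d →
      g (t * u + m * (1 - t) * v) ≤ t ^ α * g u + m * (1 - t ^ α) * g v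

noncomputable def A1 (θ lam : ℝ) : ℝ := (2 * θ * lam ^ (1 + 1 / θ) + 1) / (θ + 1) - lam

noncomputable def A2 (α θ lam : ℝ) : ℝ :=
  2 * θ * lam ^ (1 + (1 + α) / θ) / ((α + 1) * (α + θ + 1)) + 1 / (α + θ + 1) - lam / (α + 1)

noncomputable def A3 (α θ lam : ℝ) : ℝ := A1 θ lam - A2 α θ lam


set_option maxHeartbeats 1000000 in
theorem ostrowski_powmean
    (I : Set ℝ) (hI : Set.OrdConnected I) (hI0 : I ⊆ Set.Ici (0:ℝ)) (f f' : ℝ → ℝ) (m a b : ℝ)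
    (hm : m ∈ Set.Ioc (0:ℝ) 1) (hab : a < b)
    (hma : m * a ∈ interior I) (hb : b ∈ interior I)
    (hf : ∀ y ∈ interior I, HasDerivAt f (f' y) y)
    (hint : IntervalIntegrable f' MeasureTheory.volume (m * a) (m * b))
    (α q : ℝ) (hα : α ∈ Set.Icc (0:ℝ) 1) (hq : 1 ≤ q)
    (hconv : AlphaMConvexOn α m (m * a) b (fun u => |f' u| ^ q))
    (M : ℝ) (hM : ∀ u ∈ Set.Icc (m * a) b, |f' u| ≤ M) :
    ∀ x ∈ Set.Icc a b, ∀ θ : ℝ, 0 < θ →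
      |((x - a) ^ θ + (b - x) ^ θ) / (b - a) * f (m * x) -
          Real.Gamma (θ + 1) / (m ^ θ * (b - a)) *
            (rlLeft θ (m * a) (m * x) f + rlRight θ (m * x) (m * b) f)| ≤
        m * M * (1 / (θ + 1)) * ((α * m + θ + 1) / (α + θ + 1)) ^ (1 / q) *
          (((x - a) ^ (θ + 1) + (b - x) ^ (θ + 1)) / (b - a)) := by
  obtain ⟨hm0, hm1⟩ := hm
  obtain ⟨hα0, hα1⟩ := hα
  intro x hx θ hθ
  obtain ⟨hxa, hxb⟩ := hx
  have hq0 : (0:ℝ) < q := lt_of_lt_of_le one_pos hq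
  have hma0 : (0:ℝ) ≤ m * a := hI0 (interior_subset hma)
  have ha0 : (0:ℝ) ≤ a := by nlinarith
  have hb0 : (0:ℝ) ≤ b := hI0 (interior_subset hb)
  have hx0 : (0:ℝ) ≤ x := le_trans ha0 hxa
  have hmaa : m * a ≤ a := by nlinarith
  have hmxb : m * x ≤ b := by nlinarith
  have hmbb : m * b ≤ b := by nlinarith
  have hmax : m * a ≤ m * x := by nlinarith
  have hmxmb : m * x ≤ m * b := by nlinarith
  have hba : (0:ℝ) < b - a := sub_pos.2 hab
  have hIccsub : Icc (m * a) b ⊆ interior I := hI.interior.out hma hb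
  have hd : ∀ u ∈ Icc (m * a) b, HasDerivAt f (f' u) u := fun u hu => hf u (hIccsub hu)
  have hmab : m * a ≤ b := le_trans hmaa hab.le
  have hM0 : (0:ℝ) ≤ M := le_trans (abs_nonneg _) (hM b ⟨hmab, le_refl b⟩)
  have hdl : ∀ u ∈ Icc (m * a) (m * x), HasDerivAt f (f' u) u :=
    fun u hu => hd u ⟨hu.1, le_trans hu.2 hmxb⟩
  have hdr : ∀ u ∈ Icc (m * x) (m * b), HasDerivAt f (f' u) u :=
    fun u hu => hd u ⟨le_trans hmax hu.1, le_trans hu.2 hmbb⟩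
  have hintl : IntervalIntegrable f' volume (m * a) (m * x) := by
    refine hint.mono_set ?_
    rw [Set.uIcc_of_le hmax, Set.uIcc_of_le (le_trans hmax hmxmb)]
    exact Icc_subset_Icc le_rfl hmxmb
  have hintr : IntervalIntegrable f' volume (m * x) (m * b) := by
    refine hint.mono_set ?_
    rw [Set.uIcc_of_le hmxmb, Set.uIcc_of_le (le_trans hmax hmxmb)]
    exact Icc_subset_Icc hmax le_rfl
  set IL := ∫ u in (m*a)..(m*x), (u - m*a) ^ (θ-1) * f u with hILdef
  set IR := ∫ u in (m*x)..(m*b), (m*b - u) ^ (θ-1) * f u with hIRdef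
  set P := ∫ u in (m*a)..(m*x), (u - m*a) ^ θ * f' u with hPdef
  set Q := ∫ u in (m*x)..(m*b), (m*b - u) ^ θ * f' u with hQdef
  have h1 := ibp_left f f' (m*a) (m*x) θ hθ hmax hdl hintl
  have h2 := ibp_right f f' (m*x) (m*b) θ hθ hmxmb hdr hintr
  rw [← hILdef, ← hPdef] at h1
  rw [← hIRdef, ← hQdef] at h2
  have hmxma : m * x - m * a = m * (x - a) := by ring
  have hmbmx : m * b - m * x = m * (b - x) := by ring
  have hpow1 : (m * (x - a)) ^ θ = m ^ θ * (x - a) ^ θ :=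
    Real.mul_rpow hm0.le (by linarith)
  have hpow2 : (m * (b - x)) ^ θ = m ^ θ * (b - x) ^ θ :=
    Real.mul_rpow hm0.le (by linarith)
  rw [hmxma, hpow1] at h1
  rw [hmbmx, hpow2] at h2
  have hΓ : Real.Gamma (θ + 1) = θ * Real.Gamma θ := Real.Gamma_add_one hθ.ne'
  have hΓpos : 0 < Real.Gamma θ := Real.Gamma_pos_of_pos hθ
  have hmθ : (0:ℝ) < m ^ θ := Real.rpow_pos_of_pos hm0 θ
  -- the identity
  have hE : ((x - a) ^ θ + (b - x) ^ θ) / (b - a) * f (m * x) -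
      Real.Gamma (θ + 1) / (m ^ θ * (b - a)) *
        (rlLeft θ (m * a) (m * x) f + rlRight θ (m * x) (m * b) f) =
      (P - Q) / (m ^ θ * (b - a)) := by
    have e1 : Real.Gamma (θ + 1) / (m ^ θ * (b - a)) *
        (rlLeft θ (m * a) (m * x) f + rlRight θ (m * x) (m * b) f) =
        (θ * IL + θ * IR) / (m ^ θ * (b - a)) := by
      rw [rlLeft, rlRight, hΓ, ← hILdef, ← hIRdef]
      field_simp
    have e2 : ((x - a) ^ θ + (b - x) ^ θ) / (b - a) * f (m * x) =
        (m ^ θ * (x - a) ^ θ * f (m * x) + m ^ θ * (b - x) ^ θ * f (m * x)) /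
          (m ^ θ * (b - a)) := by
      rw [div_mul_eq_mul_div, div_eq_div_iff (by positivity) (by positivity)]
      ring
    rw [e1, e2, div_sub_div_same]
    refine congrArg (fun z => z / (m ^ θ * (b - a))) ?_
    linarith [h1, h2]
  rw [hE]
  -- bound on P
  set K := ((α * m + θ + 1) / (α + θ + 1)) ^ (1 / q) with hKdef
  have hK0 : (0:ℝ) ≤ K := Real.rpow_nonneg (by positivity) _
  have hgmeas : ∀ c d : ℝ, Set.Ioc c d ⊆ Set.Ioc (m*a) (m*b) →
      AEStronglyMeasurable (fun u => |f' u|) (volume.restrict (Set.Ioc c d)) := by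
    intro c d hsub
    have := ((hint.1.mono_set hsub).aestronglyMeasurable).norm
    simpa [Real.norm_eq_abs] using this
  have hPb : |P| ≤ M * ((m * x - m * a) ^ (θ + 1) / (θ + 1)) * K := by
    have habs : |P| ≤ ∫ u in (m*a)..(m*x), |(u - m*a) ^ θ * f' u| := by
      rw [hPdef]; exact intervalIntegral.abs_integral_le_integral_abs hmax
    have hcongr : (∫ u in (m*a)..(m*x), |(u - m*a) ^ θ * f' u|) =
        ∫ u in (m*a)..(m*x), (u - m*a) ^ θ * |f' u| := by
      refine intervalIntegral.integral_congr ?_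
      intro u hu
      rw [Set.uIcc_of_le hmax] at hu
      simp only
      rw [abs_mul, abs_of_nonneg (Real.rpow_nonneg (sub_nonneg.2 hu.1) θ)]
    refine habs.trans (hcongr.trans_le ?_)
    refine key_bound (m*a) (m*x) θ α m q M (fun u => u - m*a) (fun u => |f' u|)
      hθ hα0 hq hm0 hm1 hM0 hmax
      (continuous_id.sub continuous_const)
      (fun u hu => by refine ⟨?_, ?_⟩ <;> [linarith [hu.1]; linarith [hu.2]])
      (fun u hu => by linarith [hu.1])
      (integral_sub_rpow_left _ _ θ (by linarith))
      (?_)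
      (hgmeas _ _ (Set.Ioc_subset_Ioc le_rfl hmxmb))
      (fun u => abs_nonneg _) ?_
    · have := integral_sub_rpow_left (m*a) (m*x) (θ + α) (by linarith)
      simpa using this
    · -- convexity estimate, left side
      intro u hu
      have hamx : m * a < m * x := lt_of_lt_of_le hu.1 hu.2
      have hLpos : (0:ℝ) < m * x - m * a := by linarith
      set t := (u - m * a) / (m * x - m * a) with htdef
      have ht0 : 0 ≤ t := div_nonneg (by linarith [hu.1]) hLpos.le
      have ht1 : t ≤ 1 := (div_le_one hLpos).2 (by linarith [hu.2])
      have hpt : t * (m * x) + m * (1 - t) * a = u := by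
        have key : t * (m * x - m * a) = u - m * a := by
          rw [htdef]; exact div_mul_cancel₀ _ hLpos.ne'
        linear_combination key
      have hmem_u : t * (m * x) + m * (1 - t) * a ∈ Icc (m * a) b := by
        rw [hpt]; exact ⟨hu.1.le, le_trans hu.2 hmxb⟩
      have hmem_mx : m * x ∈ Icc (m * a) b := ⟨hmax, hmxb⟩
      have hmem_a : a ∈ Icc (m * a) b := ⟨hmaa, hab.le⟩
      have hcv := hconv (m * x) hmem_mx a hmem_a t ⟨ht0, ht1⟩ hmem_u
      simp only [hpt] at hcv
      have hb1 : |f' (m * x)| ^ q ≤ M ^ q :=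
        Real.rpow_le_rpow (abs_nonneg _) (hM _ hmem_mx) hq0.le
      have hb2 : |f' a| ^ q ≤ M ^ q :=
        Real.rpow_le_rpow (abs_nonneg _) (hM _ hmem_a) hq0.le
      have htα0 : 0 ≤ t ^ α := Real.rpow_nonneg ht0 α
      have htα1 : t ^ α ≤ 1 := Real.rpow_le_one ht0 ht1 hα0
      calc |f' u| ^ q ≤ t ^ α * |f' (m * x)| ^ q + m * (1 - t ^ α) * |f' a| ^ q := hcv
        _ ≤ t ^ α * M ^ q + m * (1 - t ^ α) * M ^ q := by
            refine add_le_add (mul_le_mul_of_nonneg_left hb1 htα0)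
              (mul_le_mul_of_nonneg_left hb2 (mul_nonneg hm0.le (by linarith)))
        _ = M ^ q * (m + (1 - m) * t ^ α) := by ring
  -- bound on Q
  have hQb : |Q| ≤ M * ((m * b - m * x) ^ (θ + 1) / (θ + 1)) * K := by
    have habs : |Q| ≤ ∫ u in (m*x)..(m*b), |(m*b - u) ^ θ * f' u| := by
      rw [hQdef]; exact intervalIntegral.abs_integral_le_integral_abs hmxmb
    have hcongr : (∫ u in (m*x)..(m*b), |(m*b - u) ^ θ * f' u|) =
        ∫ u in (m*x)..(m*b), (m*b - u) ^ θ * |f' u| := by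
      refine intervalIntegral.integral_congr ?_
      intro u hu
      rw [Set.uIcc_of_le hmxmb] at hu
      simp only
      rw [abs_mul, abs_of_nonneg (Real.rpow_nonneg (sub_nonneg.2 hu.2) θ)]
    refine habs.trans (hcongr.trans_le ?_)
    refine key_bound (m*x) (m*b) θ α m q M (fun u => m*b - u) (fun u => |f' u|)
      hθ hα0 hq hm0 hm1 hM0 hmxmb
      (continuous_const.sub continuous_id)
      (fun u hu => by refine ⟨?_, ?_⟩ <;> [linarith [hu.2]; linarith [hu.1]])
      (fun u hu => by linarith [hu.2])
      (integral_sub_rpow_right _ _ θ (by linarith))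
      (?_)
      (hgmeas _ _ (Set.Ioc_subset_Ioc hmax le_rfl))
      (fun u => abs_nonneg _) ?_
    · have := integral_sub_rpow_right (m*x) (m*b) (θ + α) (by linarith)
      simpa using this
    · -- convexity estimate, right side
      intro u hu
      have hxmb : m * x < m * b := lt_of_lt_of_le hu.1 hu.2
      have hLpos : (0:ℝ) < m * b - m * x := by linarith
      set t := (m * b - u) / (m * b - m * x) with htdef
      have ht0 : 0 ≤ t := div_nonneg (by linarith [hu.2]) hLpos.le
      have ht1 : t ≤ 1 := (div_le_one hLpos).2 (by linarith [hu.1])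
      have hpt : t * (m * x) + m * (1 - t) * b = u := by
        have key : t * (m * b - m * x) = m * b - u := by
          rw [htdef]; exact div_mul_cancel₀ _ hLpos.ne'
        linear_combination -key
      have hmem_u : t * (m * x) + m * (1 - t) * b ∈ Icc (m * a) b := by
        rw [hpt]
        exact ⟨le_trans hmax hu.1.le, le_trans hu.2 hmbb⟩
      have hmem_mx : m * x ∈ Icc (m * a) b := ⟨hmax, hmxb⟩
      have hmem_b : b ∈ Icc (m * a) b := ⟨hmab, le_refl b⟩
      have hcv := hconv (m * x) hmem_mx b hmem_b t ⟨ht0, ht1⟩ hmem_u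
      simp only [hpt] at hcv
      have hb1 : |f' (m * x)| ^ q ≤ M ^ q :=
        Real.rpow_le_rpow (abs_nonneg _) (hM _ hmem_mx) hq0.le
      have hb2 : |f' b| ^ q ≤ M ^ q :=
        Real.rpow_le_rpow (abs_nonneg _) (hM _ hmem_b) hq0.le
      have htα0 : 0 ≤ t ^ α := Real.rpow_nonneg ht0 α
      have htα1 : t ^ α ≤ 1 := Real.rpow_le_one ht0 ht1 hα0
      calc |f' u| ^ q ≤ t ^ α * |f' (m * x)| ^ q + m * (1 - t ^ α) * |f' b| ^ q := hcv
        _ ≤ t ^ α * M ^ q + m * (1 - t ^ α) * M ^ q := by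
            refine add_le_add (mul_le_mul_of_nonneg_left hb1 htα0)
              (mul_le_mul_of_nonneg_left hb2 (mul_nonneg hm0.le (by linarith)))
        _ = M ^ q * (m + (1 - m) * t ^ α) := by ring
  -- final assembly
  have hD : (0:ℝ) < m ^ θ * (b - a) := by positivity
  rw [abs_div, abs_of_pos hD]
  have htri : |P - Q| ≤ |P| + |Q| := abs_sub P Q
  have hsum : |P - Q| ≤ M * ((m * x - m * a) ^ (θ + 1) / (θ + 1)) * K
      + M * ((m * b - m * x) ^ (θ + 1) / (θ + 1)) * K :=
    htri.trans (add_le_add hPb hQb)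
  have hpow1' : (m * x - m * a) ^ (θ + 1) = m ^ θ * m * (x - a) ^ (θ + 1) := by
    rw [hmxma, Real.mul_rpow hm0.le (by linarith), Real.rpow_add_one hm0.ne' θ]
  have hpow2' : (m * b - m * x) ^ (θ + 1) = m ^ θ * m * (b - x) ^ (θ + 1) := by
    rw [hmbmx, Real.mul_rpow hm0.le (by linarith), Real.rpow_add_one hm0.ne' θ]
  rw [hpow1', hpow2'] at hsum
  rw [div_le_iff₀ hD]
  refine hsum.trans (le_of_eq ?_)
  field_simp
end

section
/- Let f : I ⊂ [0,∞) → ℝ be differentiable on I°, m ∈ (0,1], ma, b ∈ I° with a < b, and suppose f' is integrable on [ma, mb]. If |f'|^q is (α,m)-convex on [ma,b] for some fixed q > 1 and (α,m) ∈ [0,1]², then for every x ∈ [a,b], λ ∈ [0,1] and θ > 0, with p = q/(q−1): |S_f(mx,λ,θ,ma,mb)| ≤ (m^θ A₄(θ,λ,p)^{1/p}/(b−a)) { (x−a)^{θ+1} ((|f'(mx)|^q + αm |f'(a)|^q)/(α+1))^{1/q} + (b−x)^{θ+1} ((|f'(mx)|^q + αm |f'(b)|^q)/(α+1))^{1/q}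 }, where A₄(θ,λ,p) = ∫₀¹ |t^θ − λ|^p dt. -/
open MeasureTheory Set intervalIntegral Real

lemma rpow_succ' {c : ℝ} (hc : 0 ≤ c) {θ : ℝ} (hθ : 0 < θ) : c ^ (θ + 1) = c ^ θ * c := by
  rcases eq_or_lt_of_le hc with h | h
  · rw [← h, Real.zero_rpow (by positivity), mul_zero]
  · rw [Real.rpow_add_one h.ne' θ]

lemma comp_affine_II {F : ℝ → ℝ} {E X : ℝ}
    (h : IntervalIntegrable F MeasureTheory.volume E X) :
    IntervalIntegrable (fun t => F ((X - E) * t + E)) MeasureTheory.volume 0 1 := by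
  rcases eq_or_ne X E with rfl | hne
  · have : (fun t : ℝ => F ((X - X) * t + X)) = fun _ => F X := by
      funext t; simp
    rw [this]; exact intervalIntegrable_const
  · have h1 := h.comp_add_right E
    have h2 := h1.comp_mul_left (c := X - E)
    simp only [sub_self, zero_div, div_self (sub_ne_zero.mpr hne)] at h2
    exact h2

lemma key_id {F F' : ℝ → ℝ} {E X θ : ℝ} (lam : ℝ) (hθ : 0 < θ)
    (hder : ∀ y ∈ Set.uIcc E X, HasDerivAt F (F' y) y)
    (hint : IntervalIntegrable F' MeasureTheory.volume E X) :
    ∫ t in (0:ℝ)..1, (t ^ θ - lam) * ((X - E) * F' ((X - E) * t + E)) =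
      (1 - lam) * F X + lam * F E
        - θ * ∫ t in (0:ℝ)..1, t ^ (θ - 1) * F ((X - E) * t + E) := by
  have hψcont : Continuous fun t : ℝ => (X - E) * t + E := by continuity
  have hψmem : ∀ t ∈ Set.Icc (0:ℝ) 1, (X - E) * t + E ∈ Set.uIcc E X := by
    intro t ht
    rcases le_total E X with h | h
    · rw [Set.uIcc_of_le h]
      constructor <;> nlinarith [ht.1, ht.2]
    · rw [Set.uIcc_of_ge h]
      constructor <;> nlinarith [ht.1, ht.2]
  have hucont : ContinuousOn (fun t : ℝ => t ^ θ - lam) (Set.uIcc (0:ℝ) 1) := by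
    apply Continuous.continuousOn
    exact (continuous_iff_continuousAt.2 fun x =>
      Real.continuousAt_rpow_const x θ (Or.inr hθ.le)).sub continuous_const
  have hvcont : ContinuousOn (fun t : ℝ => F ((X - E) * t + E)) (Set.uIcc (0:ℝ) 1) := by
    intro t ht
    rw [Set.uIcc_of_le zero_le_one] at ht
    exact ContinuousAt.comp_continuousWithinAt
      ((hder _ (hψmem t ht)).continuousAt) (hψcont.continuousWithinAt (x := t))
  have huderiv : ∀ t ∈ Set.Ioo (min (0:ℝ) 1) (max 0 1),
      HasDerivWithinAt (fun t : ℝ => t ^ θ - lam) (θ * t ^ (θ - 1)) (Set.Ioi t) t := by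
    intro t ht
    rw [min_eq_left zero_le_one, max_eq_right zero_le_one] at ht
    exact ((Real.hasDerivAt_rpow_const (Or.inl ht.1.ne')).sub_const lam).hasDerivWithinAt
  have hvderiv : ∀ t ∈ Set.Ioo (min (0:ℝ) 1) (max 0 1),
      HasDerivWithinAt (fun t : ℝ => F ((X - E) * t + E))
        ((X - E) * F' ((X - E) * t + E)) (Set.Ioi t) t := by
    intro t ht
    rw [min_eq_left zero_le_one, max_eq_right zero_le_one] at ht
    have hψd : HasDerivAt (fun t : ℝ => (X - E) * t + E) (X - E) t := by
      simpa using ((hasDerivAt_id t).const_mul (X - E)).add_const E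
    have := (hder _ (hψmem t (Set.Ioo_subset_Icc_self ht))).comp t hψd
    have h2 : F' ((X - E) * t + E) * (X - E) = (X - E) * F' ((X - E) * t + E) := mul_comm _ _
    rw [h2] at this
    exact this.hasDerivWithinAt
  have hu' : IntervalIntegrable (fun t : ℝ => θ * t ^ (θ - 1)) MeasureTheory.volume 0 1 :=
    (intervalIntegral.intervalIntegrable_rpow' (by linarith)).const_mul θ
  have hv' : IntervalIntegrable (fun t : ℝ => (X - E) * F' ((X - E) * t + E))
      MeasureTheory.volume 0 1 := (comp_affine_II hint).const_mul (X - E)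
  have ibp := intervalIntegral.integral_mul_deriv_eq_deriv_mul_of_hasDeriv_right
    hucont hvcont huderiv hvderiv hu' hv'
  rw [ibp]
  have h1 : ((1:ℝ) ^ θ - lam) = 1 - lam := by rw [Real.one_rpow]
  have h0 : ((0:ℝ) ^ θ - lam) = - lam := by rw [Real.zero_rpow hθ.ne']; ring
  rw [show ∫ t in (0:ℝ)..1, θ * t ^ (θ - 1) * F ((X - E) * t + E)
      = θ * ∫ t in (0:ℝ)..1, t ^ (θ - 1) * F ((X - E) * t + E) by
    rw [← intervalIntegral.integral_const_mul]; congr 1; funext t; ring]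
  simp only [h1, h0, mul_one, mul_zero, add_zero, zero_add]
  ring

lemma key_sub {F : ℝ → ℝ} {E X θ : ℝ} (hθ : 0 < θ) (hEX : E ≤ X)
    (hcont : ContinuousOn F (Set.Icc E X)) :
    ∫ s in E..X, (s - E) ^ (θ - 1) * F s =
      (X - E) ^ θ * ∫ t in (0:ℝ)..1, t ^ (θ - 1) * F ((X - E) * t + E) := by
  rcases eq_or_lt_of_le hEX with rfl | hlt
  · simp [Real.zero_rpow hθ.ne']
  have hXE : (0:ℝ) < X - E := sub_pos.mpr hlt
  have hψcont : ContinuousOn (fun t : ℝ => (X - E) * t + E) (Set.uIcc (0:ℝ) 1) := by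
    fun_prop
  have hψd : ∀ t ∈ Set.Ioo (min (0:ℝ) 1) (max 0 1),
      HasDerivWithinAt (fun t : ℝ => (X - E) * t + E) (X - E) (Set.Ioi t) t := by
    intro t _
    have h : HasDerivAt (fun t : ℝ => (X - E) * t + E) (X - E) t := by
      simpa using ((hasDerivAt_id t).const_mul (X - E)).add_const E
    exact h.hasDerivWithinAt
  have hψmem : ∀ t ∈ Set.Icc (0:ℝ) 1, (X - E) * t + E ∈ Set.Icc E X := by
    intro t ht; constructor <;> nlinarith [ht.1, ht.2]
  have himg1 : (fun t : ℝ => (X - E) * t + E) '' Set.Ioo (min (0:ℝ) 1) (max 0 1)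
      ⊆ Set.Ioo E X := by
    rintro _ ⟨t, ht, rfl⟩
    rw [min_eq_left zero_le_one, max_eq_right zero_le_one] at ht
    dsimp only
    constructor <;> nlinarith [ht.1, ht.2]
  have himg2 : (fun t : ℝ => (X - E) * t + E) '' Set.uIcc (0:ℝ) 1 ⊆ Set.Icc E X := by
    rintro _ ⟨t, ht, rfl⟩
    rw [Set.uIcc_of_le zero_le_one] at ht
    exact hψmem t ht
  have hgcont : ContinuousOn (fun s : ℝ => (s - E) ^ (θ - 1) * F s)
      ((fun t : ℝ => (X - E) * t + E) '' Set.Ioo (min (0:ℝ) 1) (max 0 1)) := by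
    refine ContinuousOn.mono ?_ himg1
    apply ContinuousOn.mul
    · intro s hs
      exact ((continuousAt_id.sub continuousAt_const).rpow_const
        (Or.inl (sub_ne_zero.mpr (ne_of_gt hs.1)))).continuousWithinAt
    · exact hcont.mono Set.Ioo_subset_Icc_self
  have hrint : IntervalIntegrable (fun s : ℝ => (s - E) ^ (θ - 1)) MeasureTheory.volume E X := by
    have := intervalIntegral.intervalIntegrable_rpow' (a := 0) (b := X - E)
      (r := θ - 1) (by linarith)
    simpa using this.comp_sub_right E
  have hgint : IntervalIntegrable (fun s : ℝ => (s - E) ^ (θ - 1) * F s)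
      MeasureTheory.volume E X := by
    apply hrint.mul_continuousOn
    rwa [Set.uIcc_of_le hEX]
  have hg1 : IntegrableOn (fun s : ℝ => (s - E) ^ (θ - 1) * F s)
      ((fun t : ℝ => (X - E) * t + E) '' Set.uIcc (0:ℝ) 1) := by
    refine IntegrableOn.mono_set ?_ himg2
    rw [← Set.uIcc_of_le hEX]
    exact ((intervalIntegrable_iff').mp hgint)
  have hFψ : ContinuousOn (fun t : ℝ => F ((X - E) * t + E)) (Set.uIcc (0:ℝ) 1) := by
    apply hcont.comp hψcont
    intro t ht
    rw [Set.uIcc_of_le zero_le_one] at ht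
    exact hψmem t ht
  have heq : Set.EqOn
      (fun t : ℝ => (X - E) • (((X - E) * t + E - E) ^ (θ - 1) * F ((X - E) * t + E)))
      (fun t : ℝ => (X - E) ^ θ * (t ^ (θ - 1) * F ((X - E) * t + E)))
      (Set.uIcc (0:ℝ) 1) := by
    intro t ht
    rw [Set.uIcc_of_le zero_le_one] at ht
    have h1 : (X - E) * t + E - E = (X - E) * t := by ring
    simp only [smul_eq_mul, h1]
    rw [Real.mul_rpow hXE.le ht.1]
    rw [show (X - E) ^ θ = (X - E) ^ (θ - 1) * (X - E) by
      rw [← Real.rpow_add_one hXE.ne' (θ - 1)]; ring_nf]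
    ring
  have hg2 : IntegrableOn
      (fun t : ℝ => (X - E) • ((fun s : ℝ => (s - E) ^ (θ - 1) * F s) ((X - E) * t + E)))
      (Set.uIcc (0:ℝ) 1) := by
    have hbase : IntervalIntegrable
        (fun t : ℝ => (X - E) ^ θ * (t ^ (θ - 1) * F ((X - E) * t + E)))
        MeasureTheory.volume 0 1 := by
      exact ((intervalIntegral.intervalIntegrable_rpow' (by linarith)).mul_continuousOn
        hFψ).const_mul _
    have := (intervalIntegrable_iff').mp hbase
    exact this.congr_fun (fun t ht => (heq ht).symm) measurableSet_uIcc
  have key := intervalIntegral.integral_comp_smul_deriv''' (a := (0:ℝ)) (b := 1)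
    hψcont hψd hgcont hg1 hg2
  simp only [Function.comp] at key
  rw [show (X - E) * 0 + E = E by ring, show (X - E) * 1 + E = X by ring] at key
  rw [← key]
  rw [intervalIntegral.integral_congr heq]
  rw [intervalIntegral.integral_const_mul]

lemma key_sub' {F : ℝ → ℝ} {E X θ : ℝ} (hθ : 0 < θ) (hXE : X ≤ E)
    (hcont : ContinuousOn F (Set.Icc X E)) :
    ∫ s in X..E, (E - s) ^ (θ - 1) * F s =
      (E - X) ^ θ * ∫ t in (0:ℝ)..1, t ^ (θ - 1) * F ((X - E) * t + E) := by
  have hc : ContinuousOn (fun u : ℝ => F (-u)) (Set.Icc (-E) (-X)) := by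
    apply hcont.comp (by fun_prop)
    intro u hu
    exact ⟨by linarith [hu.2], by linarith [hu.1]⟩
  have h := key_sub (F := fun u => F (-u)) (E := -E) (X := -X) hθ (by linarith) hc
  have hL : ∫ s in (-E)..(-X), (s - -E) ^ (θ - 1) * F (-s)
      = ∫ s in X..E, (E - s) ^ (θ - 1) * F s := by
    have := intervalIntegral.integral_comp_neg (a := -E) (b := -X)
      (fun s => (E - s) ^ (θ - 1) * F s)
    simp only [neg_neg] at this
    rw [← this]
    congr 1; funext s; rw [show E - -s = s - -E by ring]
  rw [hL] at h
  rw [h]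
  congr 1
  · congr 1; ring
  · congr 1; funext t; congr 2; ring

lemma key_holder {g : ℝ → ℝ} {θ lam q α m C1 C2 : ℝ} (hθ : 0 < θ) (hq : 1 < q)
    (hα : 0 ≤ α) (hm : 0 < m) (hC1 : 0 ≤ C1) (hC2 : 0 ≤ C2)
    (hgi : IntervalIntegrable g MeasureTheory.volume 0 1)
    (hbound : ∀ t ∈ Set.Icc (0:ℝ) 1, |g t| ^ q ≤ t ^ α * C1 + m * (1 - t ^ α) * C2) :
    |∫ t in (0:ℝ)..1, (t ^ θ - lam) * g t| ≤
      (∫ t in (0:ℝ)..1, |t ^ θ - lam| ^ (q / (q - 1))) ^ (1 / (q / (q - 1))) *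
        ((C1 + α * m * C2) / (α + 1)) ^ (1 / q) := by
  have hq0 : (0:ℝ) < q := by linarith
  set p := q / (q - 1) with hp
  have hpq : p.HolderConjugate q := (Real.HolderConjugate.conjExponent hq).symm
  have hp1 : 1 < p := hpq.lt
  set μ := MeasureTheory.volume.restrict (Set.Ioc (0:ℝ) 1) with hμ
  haveI : IsFiniteMeasure μ := by
    constructor
    rw [hμ, Measure.restrict_apply_univ]
    simp [Real.volume_Ioc]
  have hcont1 : Continuous fun t : ℝ => t ^ θ - lam :=
    (continuous_iff_continuousAt.2 fun x =>
      Real.continuousAt_rpow_const x θ (Or.inr hθ.le)).sub continuous_const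
  have hmem1 : MemLp (fun t : ℝ => t ^ θ - lam) (ENNReal.ofReal p) μ := by
    apply MemLp.of_bound hcont1.aestronglyMeasurable (1 + |lam|)
    rw [hμ, MeasureTheory.ae_restrict_iff' measurableSet_Ioc]
    filter_upwards with t ht
    have h1 : t ^ θ ≤ 1 := Real.rpow_le_one ht.1.le ht.2 hθ.le
    have h2 : 0 ≤ t ^ θ := Real.rpow_nonneg ht.1.le θ
    rw [Real.norm_eq_abs]
    calc |t ^ θ - lam| ≤ |t ^ θ| + |lam| := abs_sub _ _
      _ ≤ 1 + |lam| := by rw [abs_of_nonneg h2]; linarith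
  have hD : ∀ t ∈ Set.Icc (0:ℝ) 1, |g t| ^ q ≤ C1 + m * C2 := by
    intro t ht
    have h1 : t ^ α ≤ 1 := Real.rpow_le_one ht.1 ht.2 hα
    have h2 : 0 ≤ t ^ α := Real.rpow_nonneg ht.1 α
    calc |g t| ^ q ≤ t ^ α * C1 + m * (1 - t ^ α) * C2 := hbound t ht
      _ ≤ C1 + m * C2 := by
        nlinarith [mul_le_mul_of_nonneg_right h1 hC1,
          mul_nonneg (mul_nonneg hm.le h2) hC2]
  have hgabs : ∀ t ∈ Set.Icc (0:ℝ) 1, |g t| ≤ (C1 + m * C2) ^ (1 / q) := by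
    intro t ht
    have h := hD t ht
    have h2 : (|g t| ^ q) ^ (1 / q) ≤ (C1 + m * C2) ^ (1 / q) :=
      Real.rpow_le_rpow (Real.rpow_nonneg (abs_nonneg _) q) h (by positivity)
    rwa [← Real.rpow_mul (abs_nonneg _), mul_one_div, div_self hq0.ne',
      Real.rpow_one] at h2
  have hgm : AEStronglyMeasurable g μ := hgi.1.aestronglyMeasurable
  have hmem2 : MemLp g (ENNReal.ofReal q) μ := by
    apply MemLp.of_bound hgm ((C1 + m * C2) ^ (1 / q))
    rw [hμ, MeasureTheory.ae_restrict_iff' measurableSet_Ioc]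
    filter_upwards with t ht
    rw [Real.norm_eq_abs]
    exact hgabs t ⟨ht.1.le, ht.2⟩
  have holder := MeasureTheory.integral_mul_norm_le_Lp_mul_Lq hpq hmem1 hmem2
  -- convert interval integrals to μ integrals
  have hIoc : ∀ h : ℝ → ℝ, (∫ t in (0:ℝ)..1, h t) = ∫ t, h t ∂μ := by
    intro h
    rw [intervalIntegral.integral_of_le zero_le_one, hμ]
  have step1 : |∫ t in (0:ℝ)..1, (t ^ θ - lam) * g t| ≤
      ∫ t in (0:ℝ)..1, |(t ^ θ - lam) * g t| :=
    intervalIntegral.abs_integral_le_integral_abs zero_le_one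
  have step2 : (∫ t in (0:ℝ)..1, |(t ^ θ - lam) * g t|) =
      ∫ t, ‖t ^ θ - lam‖ * ‖g t‖ ∂μ := by
    rw [hIoc]
    congr 1; funext t
    rw [abs_mul, Real.norm_eq_abs, Real.norm_eq_abs]
  -- second factor bound
  have hint_rpow : IntervalIntegrable (fun t : ℝ => (C1 - m * C2) * t ^ α + m * C2)
      MeasureTheory.volume 0 1 :=
    ((intervalIntegral.intervalIntegrable_rpow' (by linarith)).const_mul _).add
      intervalIntegrable_const
  have hnormq : Integrable (fun t => ‖g t‖ ^ q) μ := by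
    have := hmem2.integrable_norm_rpow
      (by simp only [ne_eq, ENNReal.ofReal_eq_zero, not_le]; exact hq0) (by simp)
    simpa [ENNReal.toReal_ofReal hq0.le] using this
  have hsecond : (∫ t, ‖g t‖ ^ q ∂μ) ≤ (C1 + α * m * C2) / (α + 1) := by
    have hmono : (∫ t, ‖g t‖ ^ q ∂μ) ≤ ∫ t, ((C1 - m * C2) * t ^ α + m * C2) ∂μ := by
      rw [hμ]
      apply MeasureTheory.setIntegral_mono_on
      · exact hnormq
      · exact hint_rpow.1
      · exact measurableSet_Ioc
      · intro t ht
        have := hbound t ⟨ht.1.le, ht.2⟩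
        rw [Real.norm_eq_abs]
        calc |g t| ^ q ≤ t ^ α * C1 + m * (1 - t ^ α) * C2 := this
          _ = (C1 - m * C2) * t ^ α + m * C2 := by ring
    have hcalc : (∫ t, ((C1 - m * C2) * t ^ α + m * C2) ∂μ) =
        (C1 - m * C2) / (α + 1) + m * C2 := by
      rw [← hIoc]
      rw [intervalIntegral.integral_add
        ((intervalIntegral.intervalIntegrable_rpow' (by linarith)).const_mul _)
        intervalIntegrable_const]
      rw [intervalIntegral.integral_const_mul, integral_rpow (Or.inl (by linarith))]
      simp [Real.zero_rpow (by positivity : α + 1 ≠ 0)]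
      try ring
    rw [hcalc] at hmono
    have : (C1 - m * C2) / (α + 1) + m * C2 = (C1 + α * m * C2) / (α + 1) := by
      field_simp
      try ring
    linarith [hmono]
  -- assemble
  have hfirst : (∫ t, ‖t ^ θ - lam‖ ^ p ∂μ) ^ (1 / p) =
      (∫ t in (0:ℝ)..1, |t ^ θ - lam| ^ p) ^ (1 / p) := by
    rw [hIoc]
    simp only [Real.norm_eq_abs]
  calc |∫ t in (0:ℝ)..1, (t ^ θ - lam) * g t|
      ≤ ∫ t, ‖t ^ θ - lam‖ * ‖g t‖ ∂μ := by rw [← step2]; exact step1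
    _ ≤ (∫ t, ‖t ^ θ - lam‖ ^ p ∂μ) ^ (1 / p) * (∫ t, ‖g t‖ ^ q ∂μ) ^ (1 / q) := holder
    _ ≤ (∫ t in (0:ℝ)..1, |t ^ θ - lam| ^ p) ^ (1 / p) *
          ((C1 + α * m * C2) / (α + 1)) ^ (1 / q) := by
      rw [hfirst]
      apply mul_le_mul_of_nonneg_left
      · exact Real.rpow_le_rpow (MeasureTheory.integral_nonneg fun t =>
          Real.rpow_nonneg (norm_nonneg _) q) hsecond (by positivity)
      · exact Real.rpow_nonneg (intervalIntegral.integral_nonneg zero_le_one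
          fun t ht => Real.rpow_nonneg (abs_nonneg _) _) _

set_option maxHeartbeats 1000000 in
theorem holder_ineq
    (I : Set ℝ) (hI : Set.OrdConnected I) (hI0 : I ⊆ Set.Ici (0:ℝ)) (f f' : ℝ → ℝ) (m a b : ℝ)
    (hm : m ∈ Set.Ioc (0:ℝ) 1) (hab : a < b)
    (hma : m * a ∈ interior I) (hb : b ∈ interior I)
    (hf : ∀ y ∈ interior I, HasDerivAt f (f' y) y)
    (hint : IntervalIntegrable f' MeasureTheory.volume (m * a) (m * b))
    (α q : ℝ) (hα : α ∈ Set.Icc (0:ℝ) 1) (hq : 1 < q)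
    (hconv : AlphaMConvexOn α m (m * a) b (fun u => |f' u| ^ q)) :
    ∀ x ∈ Set.Icc a b, ∀ lam ∈ Set.Icc (0:ℝ) 1, ∀ θ : ℝ, 0 < θ →
      |Sf f m a b x lam θ| ≤
        m ^ θ * (∫ t in (0:ℝ)..1, |t ^ θ - lam| ^ (q / (q - 1))) ^ (1 / (q / (q - 1))) /
            (b - a) *
          ((x - a) ^ (θ + 1) *
              ((|f' (m * x)| ^ q + α * m * |f' a| ^ q) / (α + 1)) ^ (1 / q) +
            (b - x) ^ (θ + 1) *
              ((|f' (m * x)| ^ q + α * m * |f' b| ^ q) / (α + 1)) ^ (1 / q)) := by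
  intro x hx lam hlam θ hθ
  obtain ⟨hm0, hm1⟩ := hm
  obtain ⟨hax, hxb⟩ := hx
  obtain ⟨hα0, hα1⟩ := hα
  have hba : (0:ℝ) < b - a := sub_pos.mpr hab
  have hma0 : 0 ≤ m * a := hI0 (interior_subset hma)
  have hb0 : 0 ≤ b := hI0 (interior_subset hb)
  have ha0 : 0 ≤ a := nonneg_of_mul_nonneg_right hma0 hm0
  have hx0 : 0 ≤ x := le_trans ha0 hax
  have hBb' : m * b ≤ b := by linarith [mul_nonneg (sub_nonneg.mpr hm1) hb0]
  have hAX : m * a ≤ m * x := mul_le_mul_of_nonneg_left hax hm0.le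
  have hXB : m * x ≤ m * b := mul_le_mul_of_nonneg_left hxb hm0.le
  have hXb : m * x ≤ b := by linarith [mul_nonneg (sub_nonneg.mpr hm1) hx0]
  have hBb : m * b ≤ b := hBb'
  have hmaa : m * a ≤ a := by linarith [mul_nonneg (sub_nonneg.mpr hm1) ha0]
  have hIcc : Set.Icc (m * a) b ⊆ interior I := hI.interior.out hma hb
  have hder : ∀ y ∈ Set.Icc (m * a) b, HasDerivAt f (f' y) y := fun y hy => hf y (hIcc hy)
  have hcont : ContinuousOn f (Set.Icc (m * a) b) := fun y hy =>
    (hder y hy).continuousAt.continuousWithinAt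
  have hsub1 : Set.Icc (m * a) (m * x) ⊆ Set.Icc (m * a) b := Set.Icc_subset_Icc_right hXb
  have hsub2 : Set.Icc (m * x) (m * b) ⊆ Set.Icc (m * a) b := Set.Icc_subset_Icc hAX hBb
  have hint1 : IntervalIntegrable f' MeasureTheory.volume (m * a) (m * x) :=
    hint.mono_set (by
      rw [Set.uIcc_of_le hAX, Set.uIcc_of_le (hAX.trans hXB)]
      exact Set.Icc_subset_Icc_right hXB)
  have hint2 : IntervalIntegrable f' MeasureTheory.volume (m * b) (m * x) :=
    hint.symm.mono_set (by
      rw [Set.uIcc_of_ge hXB, Set.uIcc_of_ge (hAX.trans hXB)]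
      exact Set.Icc_subset_Icc_left hAX)
  have hder1 : ∀ y ∈ Set.uIcc (m * a) (m * x), HasDerivAt f (f' y) y := by
    rw [Set.uIcc_of_le hAX]; exact fun y hy => hder y (hsub1 hy)
  have hder2 : ∀ y ∈ Set.uIcc (m * b) (m * x), HasDerivAt f (f' y) y := by
    rw [Set.uIcc_of_ge hXB]; exact fun y hy => hder y (hsub2 hy)
  have eq1 := key_id (F := f) (F' := f') (E := m * a) (X := m * x) lam hθ hder1 hint1
  have eq2 := key_id (F := f) (F' := f') (E := m * b) (X := m * x) lam hθ hder2 hint2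
  have sub1 := key_sub (F := f) (E := m * a) (X := m * x) hθ hAX (hcont.mono hsub1)
  have sub2 := key_sub' (F := f) (E := m * b) (X := m * x) hθ hXB (hcont.mono hsub2)
  set T1 := ∫ t in (0:ℝ)..1, (t ^ θ - lam) * f' ((m * x - m * a) * t + m * a) with hT1def
  set T2 := ∫ t in (0:ℝ)..1, (t ^ θ - lam) * f' ((m * x - m * b) * t + m * b) with hT2def
  set I1 := ∫ t in (0:ℝ)..1, t ^ (θ - 1) * f ((m * x - m * a) * t + m * a) with hI1def
  set I2 := ∫ t in (0:ℝ)..1, t ^ (θ - 1) * f ((m * x - m * b) * t + m * b) with hI2def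
  have hpull1 : (∫ t in (0:ℝ)..1, (t ^ θ - lam) * ((m * x - m * a) * f' ((m * x - m * a) * t + m * a)))
      = (m * x - m * a) * T1 := by
    rw [hT1def, ← intervalIntegral.integral_const_mul]
    congr 1; funext t; ring
  have hpull2 : (∫ t in (0:ℝ)..1, (t ^ θ - lam) * ((m * x - m * b) * f' ((m * x - m * b) * t + m * b)))
      = (m * x - m * b) * T2 := by
    rw [hT2def, ← intervalIntegral.integral_const_mul]
    congr 1; funext t; ring
  rw [hpull1] at eq1
  rw [hpull2] at eq2
  -- key identity for Sf
  have hGpos : 0 < Real.Gamma θ := Real.Gamma_pos_of_pos hθ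
  have hGamma : Real.Gamma (θ + 1) = θ * Real.Gamma θ := Real.Gamma_add_one hθ.ne'
  have hmul1 : (m * x - m * a) ^ θ = m ^ θ * (x - a) ^ θ := by
    rw [show m * x - m * a = m * (x - a) by ring,
      Real.mul_rpow hm0.le (by linarith)]
  have hmul2 : (m * b - m * x) ^ θ = m ^ θ * (b - x) ^ θ := by
    rw [show m * b - m * x = m * (b - x) by ring,
      Real.mul_rpow hm0.le (by linarith)]
  have hplus1 : (x - a) ^ (θ + 1) = (x - a) ^ θ * (x - a) :=
    rpow_succ' (by linarith) hθ
  have hplus2 : (b - x) ^ (θ + 1) = (b - x) ^ θ * (b - x) :=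
    rpow_succ' (by linarith) hθ
  have hmm : m ^ (θ - 1) = m ^ θ / m := Real.rpow_sub_one hm0.ne' θ
  have hI1 : θ * I1 = (1 - lam) * f (m * x) + lam * f (m * a) - (m * x - m * a) * T1 := by
    linarith [eq1]
  have hI2 : θ * I2 = (1 - lam) * f (m * x) + lam * f (m * b) - (m * x - m * b) * T2 := by
    linarith [eq2]
  have hRL : Real.Gamma (θ + 1) / (m * (b - a)) *
      (rlLeft θ (m * a) (m * x) f + rlRight θ (m * x) (m * b) f) =
      m ^ θ * (x - a) ^ θ / (m * (b - a)) * (θ * I1)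
        + m ^ θ * (b - x) ^ θ / (m * (b - a)) * (θ * I2) := by
    rw [rlLeft, rlRight, sub1, sub2, hGamma, hmul1, hmul2]
    field_simp
  have hSf : Sf f m a b x lam θ =
      m ^ θ * (x - a) ^ (θ + 1) / (b - a) * T1
        - m ^ θ * (b - x) ^ (θ + 1) / (b - a) * T2 := by
    rw [Sf, hRL, hI1, hI2, hplus1, hplus2, hmm]
    field_simp
    ring
  have hq1 : (0:ℝ) ≤ |f' (m * x)| ^ q := Real.rpow_nonneg (abs_nonneg _) q
  have hgi1 : IntervalIntegrable (fun t => f' ((m * x - m * a) * t + m * a))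
      MeasureTheory.volume 0 1 := comp_affine_II hint1
  have hgi2 : IntervalIntegrable (fun t => f' ((m * x - m * b) * t + m * b))
      MeasureTheory.volume 0 1 := comp_affine_II hint2
  have hbound1 : ∀ t ∈ Set.Icc (0:ℝ) 1,
      |f' ((m * x - m * a) * t + m * a)| ^ q ≤
        t ^ α * |f' (m * x)| ^ q + m * (1 - t ^ α) * |f' a| ^ q := by
    intro t ht
    have hmemu : m * x ∈ Set.Icc (m * a) b := ⟨hAX, hXb⟩
    have hmemv : a ∈ Set.Icc (m * a) b := ⟨hmaa, hab.le⟩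
    have hmemc : t * (m * x) + m * (1 - t) * a ∈ Set.Icc (m * a) b := by
      constructor
      · linarith [mul_nonneg (mul_nonneg hm0.le ht.1) (sub_nonneg.mpr hax)]
      · linarith [mul_nonneg (mul_nonneg hm0.le (sub_nonneg.mpr ht.2))
          (sub_nonneg.mpr hax), hXb]
    have hcv := hconv (m * x) hmemu a hmemv t ht hmemc
    simp only at hcv
    rw [show (m * x - m * a) * t + m * a = t * (m * x) + m * (1 - t) * a by ring]
    exact hcv
  have hbound2 : ∀ t ∈ Set.Icc (0:ℝ) 1,
      |f' ((m * x - m * b) * t + m * b)| ^ q ≤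
        t ^ α * |f' (m * x)| ^ q + m * (1 - t ^ α) * |f' b| ^ q := by
    intro t ht
    have hmemu : m * x ∈ Set.Icc (m * a) b := ⟨hAX, hXb⟩
    have hmemv : b ∈ Set.Icc (m * a) b := ⟨hmaa.trans hab.le, le_refl b⟩
    have hmemc : t * (m * x) + m * (1 - t) * b ∈ Set.Icc (m * a) b := by
      constructor
      · linarith [mul_nonneg (mul_nonneg hm0.le ht.1) (sub_nonneg.mpr hax),
          mul_nonneg (mul_nonneg hm0.le (sub_nonneg.mpr ht.2)) (sub_nonneg.mpr hab.le)]
      · linarith [mul_nonneg (mul_nonneg hm0.le ht.1) (sub_nonneg.mpr hxb), hBb]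
    have hcv := hconv (m * x) hmemu b hmemv t ht hmemc
    simp only at hcv
    rw [show (m * x - m * b) * t + m * b = t * (m * x) + m * (1 - t) * b by ring]
    exact hcv
  have hHo1 := key_holder (g := fun t => f' ((m * x - m * a) * t + m * a))
    (lam := lam) hθ hq hα0 hm0 hq1 (Real.rpow_nonneg (abs_nonneg _) q) hgi1 hbound1
  have hHo2 := key_holder (g := fun t => f' ((m * x - m * b) * t + m * b))
    (lam := lam) hθ hq hα0 hm0 hq1 (Real.rpow_nonneg (abs_nonneg _) q) hgi2 hbound2
  rw [← hT1def] at hHo1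
  rw [← hT2def] at hHo2
  rw [hSf]
  have hc1 : (0:ℝ) ≤ m ^ θ * (x - a) ^ (θ + 1) / (b - a) :=
    div_nonneg (mul_nonneg (Real.rpow_nonneg hm0.le θ)
      (Real.rpow_nonneg (by linarith) _)) hba.le
  have hc2 : (0:ℝ) ≤ m ^ θ * (b - x) ^ (θ + 1) / (b - a) :=
    div_nonneg (mul_nonneg (Real.rpow_nonneg hm0.le θ)
      (Real.rpow_nonneg (by linarith) _)) hba.le
  have habs : |m ^ θ * (x - a) ^ (θ + 1) / (b - a) * T1
        - m ^ θ * (b - x) ^ (θ + 1) / (b - a) * T2| ≤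
      m ^ θ * (x - a) ^ (θ + 1) / (b - a) * |T1|
        + m ^ θ * (b - x) ^ (θ + 1) / (b - a) * |T2| := by
    calc |m ^ θ * (x - a) ^ (θ + 1) / (b - a) * T1
          - m ^ θ * (b - x) ^ (θ + 1) / (b - a) * T2|
        ≤ |m ^ θ * (x - a) ^ (θ + 1) / (b - a) * T1|
          + |m ^ θ * (b - x) ^ (θ + 1) / (b - a) * T2| := abs_sub _ _
      _ = m ^ θ * (x - a) ^ (θ + 1) / (b - a) * |T1|
          + m ^ θ * (b - x) ^ (θ + 1) / (b - a) * |T2| := by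
        rw [abs_mul, abs_mul, abs_of_nonneg hc1, abs_of_nonneg hc2]
  refine le_trans habs ?_
  have h1 := mul_le_mul_of_nonneg_left hHo1 hc1
  have h2 := mul_le_mul_of_nonneg_left hHo2 hc2
  refine le_trans (add_le_add h1 h2) (le_of_eq ?_)
  ring
end

section
/- Let f : I ⊂ [0,∞) → ℝ be differentiable on I°, m ∈ (0,1], ma, b ∈ I° with a < b, and suppose f' is integrable on [ma, mb]. If |f'|^q is (α,m)-convex on [ma,b] for some fixed q > 1 and (α,m) ∈ [0,1]², then for every x ∈ [a,b] and λ ∈ [0,1], with p = q/(q−1): |(1−λ) f(mx) + λ ((x−a) f(ma) + (b−x) f(mb))/(b−a) − (1/(m(b−a))) ∫_{ma}^{mb} f(t) dt| ≤ (m (∫₀¹ |t − λ|^p dt)^{1/p}/(b−a)) { (x−a)² ((|f'(mx)|^q + αm |f'(a)|^q)/(α+1))^{1/q} + (b−x)² ((|f'(mx)|^q + αm |f'(b)|^q)/(α+1))^{1/q} }. -/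
open MeasureTheory Set intervalIntegral Real

private lemma comp_affine_II_s12 {f : ℝ → ℝ} {c d : ℝ}
    (h : IntervalIntegrable f volume d (c + d)) :
    IntervalIntegrable (fun t => f (c * t + d)) volume 0 1 := by
  rcases eq_or_ne c 0 with hc | hc
  · simp only [hc, zero_mul, zero_add]
    exact intervalIntegrable_const
  · have h2 := (h.comp_add_right d).comp_mul_left (c := c)
    have e0 : (d - d) / c = 0 := by field_simp; ring
    have e1 : (c + d - d) / c = 1 := by field_simp; ring
    rwa [e0, e1] at h2

private lemma ibp_aux (F F' : ℝ → ℝ) (lam : ℝ)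
    (hd : ∀ t ∈ Set.uIcc (0:ℝ) 1, HasDerivAt F (F' t) t)
    (hi : IntervalIntegrable F' volume 0 1) :
    ∫ t in (0:ℝ)..1, (t - lam) * F' t
      = (1 - lam) * F 1 + lam * F 0 - ∫ t in (0:ℝ)..1, F t := by
  have h := intervalIntegral.integral_mul_deriv_eq_deriv_mul
      (u := fun t => t - lam) (u' := fun _ => 1) (v := F) (v' := F')
      (fun t _ => (hasDerivAt_id t).sub_const lam) hd intervalIntegrable_const hi
  simp only [one_mul] at h
  rw [h]; ring

private lemma holder_bound {g : ℝ → ℝ} {lam q α A B m : ℝ}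
    (hgi : IntervalIntegrable g volume 0 1)
    (hq : 1 < q) (hlam : lam ∈ Set.Icc (0:ℝ) 1)
    (hα : 0 ≤ α) (hA : 0 ≤ A) (hB : 0 ≤ B) (hm : 0 ≤ m)
    (hbound : ∀ t ∈ Set.Icc (0:ℝ) 1, |g t| ^ q ≤ t ^ α * A + m * (1 - t ^ α) * B) :
    ∫ t in (0:ℝ)..1, |t - lam| * |g t| ≤
      (∫ t in (0:ℝ)..1, |t - lam| ^ (q/(q-1))) ^ (1/(q/(q-1))) *
        ((A + α * m * B) / (α + 1)) ^ (1/q) := by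
  have hq0 : (0:ℝ) < q := lt_trans one_pos hq
  have hpq : (q/(q-1)).HolderConjugate q := (Real.HolderConjugate.conjExponent hq).symm
  set p := q/(q-1) with hp
  set μ := volume.restrict (Set.Ioc (0:ℝ) 1) with hμ
  haveI hfin : IsFiniteMeasure μ := ⟨by simp [hμ, Real.volume_Ioc]⟩
  -- pointwise bounds
  have htα : ∀ t ∈ Set.Icc (0:ℝ) 1, t ^ α ∈ Set.Icc (0:ℝ) 1 := fun t ht =>
    ⟨Real.rpow_nonneg ht.1 α, Real.rpow_le_one ht.1 ht.2 hα⟩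
  have hgb : ∀ t ∈ Set.Icc (0:ℝ) 1, |g t| ≤ (A + m * B) ^ (1/q) := by
    intro t ht
    have h3 := htα t ht
    have h1 : |g t| ^ q ≤ A + m * B := by
      have h2 := hbound t ht
      nlinarith [mul_nonneg (sub_nonneg.2 h3.2) hA, mul_nonneg h3.1 (mul_nonneg hm hB)]
    have h4 : (|g t| ^ q) ^ (1/q) ≤ (A + m * B) ^ (1/q) :=
      Real.rpow_le_rpow (Real.rpow_nonneg (abs_nonneg _) q) h1 (by positivity)
    rw [one_div] at h4
    rw [Real.rpow_rpow_inv (abs_nonneg _) (ne_of_gt hq0)] at h4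
    rw [one_div]; exact h4
  -- measurability
  have hgm : AEStronglyMeasurable g μ := hgi.1.aestronglyMeasurable
  have hmemg : MemLp g (ENNReal.ofReal q) μ := by
    refine MemLp.of_bound hgm ((A + m * B) ^ (1/q)) ?_
    filter_upwards [ae_restrict_mem measurableSet_Ioc] with t ht
    exact (Real.norm_eq_abs _ ▸ hgb t ⟨le_of_lt ht.1, ht.2⟩)
  have hmemf : MemLp (fun t => t - lam) (ENNReal.ofReal p) μ := by
    refine MemLp.of_bound ((continuous_id.sub continuous_const).aestronglyMeasurable) 1 ?_
    filter_upwards [ae_restrict_mem measurableSet_Ioc] with t ht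
    rw [Real.norm_eq_abs, abs_sub_le_iff]
    constructor <;> [linarith [ht.2, hlam.1]; linarith [ht.1, hlam.2]]
  -- Hölder
  have hH := MeasureTheory.integral_mul_norm_le_Lp_mul_Lq hpq hmemf hmemg
  simp only [Real.norm_eq_abs] at hH
  -- convert interval integrals to μ-integrals
  have e1 : ∫ t in (0:ℝ)..1, |t - lam| * |g t| = ∫ t, |t - lam| * |g t| ∂μ :=
    intervalIntegral.integral_of_le zero_le_one
  have e2 : ∫ t in (0:ℝ)..1, |t - lam| ^ p = ∫ t, |t - lam| ^ p ∂μ :=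
    intervalIntegral.integral_of_le zero_le_one
  rw [e1, e2]
  -- bound ∫ |g|^q
  have hintq : Integrable (fun t => |g t| ^ q) μ := by
    have := hmemg.integrable_norm_rpow (by simp [hq0]) (by simp)
    simpa [ENNReal.toReal_ofReal hq0.le, Real.norm_eq_abs] using this
  have hcont : Continuous (fun t : ℝ => t ^ α * A + m * (1 - t ^ α) * B) := by
    have h5 : Continuous (fun t : ℝ => t ^ α) :=
      continuous_id.rpow_const (fun x => Or.inr hα)
    exact (h5.mul continuous_const).add
      ((continuous_const.mul (continuous_const.sub h5)).mul continuous_const)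
  have hintR : Integrable (fun t : ℝ => t ^ α * A + m * (1 - t ^ α) * B) μ :=
    (hcont.intervalIntegrable 0 1).1
  have hmono : ∫ t, |g t| ^ q ∂μ ≤ ∫ t, (t ^ α * A + m * (1 - t ^ α) * B) ∂μ :=
    setIntegral_mono_on hintq hintR measurableSet_Ioc
      (fun t ht => hbound t ⟨le_of_lt ht.1, ht.2⟩)
  have hcalc : ∫ t, (t ^ α * A + m * (1 - t ^ α) * B) ∂μ = (A + α * m * B) / (α + 1) := by
    have e3 : ∫ t, (t ^ α * A + m * (1 - t ^ α) * B) ∂μ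
        = ∫ t in (0:ℝ)..1, (t ^ α * A + m * (1 - t ^ α) * B) :=
      (intervalIntegral.integral_of_le zero_le_one).symm
    rw [e3]
    have h6 : ∀ t : ℝ, t ^ α * A + m * (1 - t ^ α) * B = (A - m * B) * t ^ α + m * B :=
      fun t => by ring
    simp_rw [h6]
    have hi1 : IntervalIntegrable (fun t : ℝ => (A - m * B) * t ^ α) volume 0 1 :=
      ((continuous_const.mul (continuous_id.rpow_const (fun x => Or.inr hα))).intervalIntegrable 0 1)
    rw [intervalIntegral.integral_add hi1 intervalIntegrable_const,
      intervalIntegral.integral_const_mul, integral_rpow (Or.inl (by linarith))]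
    rw [Real.one_rpow, Real.zero_rpow (by linarith)]
    simp only [intervalIntegral.integral_const, sub_zero, smul_eq_mul, one_mul]
    field_simp
    ring
  -- assemble
  have hQnn : 0 ≤ ∫ t, |g t| ^ q ∂μ :=
    setIntegral_nonneg measurableSet_Ioc (fun t _ => Real.rpow_nonneg (abs_nonneg _) q)
  have hfac : (∫ t, |g t| ^ q ∂μ) ^ (1/q) ≤ ((A + α * m * B) / (α + 1)) ^ (1/q) :=
    Real.rpow_le_rpow hQnn (le_of_le_of_eq hmono hcalc) (by positivity)
  have hKnn : 0 ≤ (∫ t, |t - lam| ^ p ∂μ) ^ (1/p) :=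
    Real.rpow_nonneg (integral_nonneg (fun t => Real.rpow_nonneg (abs_nonneg _) p)) _
  calc ∫ t, |t - lam| * |g t| ∂μ
      ≤ (∫ t, |t - lam| ^ p ∂μ) ^ (1/p) * (∫ t, |g t| ^ q ∂μ) ^ (1/q) := hH
    _ ≤ (∫ t, |t - lam| ^ p ∂μ) ^ (1/p) * ((A + α * m * B) / (α + 1)) ^ (1/q) :=
        mul_le_mul_of_nonneg_left hfac hKnn


theorem holder_theta_one
    (I : Set ℝ) (hI : Set.OrdConnected I) (hI0 : I ⊆ Set.Ici (0:ℝ)) (f f' : ℝ → ℝ) (m a b : ℝ)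
    (hm : m ∈ Set.Ioc (0:ℝ) 1) (hab : a < b)
    (hma : m * a ∈ interior I) (hb : b ∈ interior I)
    (hf : ∀ y ∈ interior I, HasDerivAt f (f' y) y)
    (hint : IntervalIntegrable f' MeasureTheory.volume (m * a) (m * b))
    (α q : ℝ) (hα : α ∈ Set.Icc (0:ℝ) 1) (hq : 1 < q)
    (hconv : AlphaMConvexOn α m (m * a) b (fun u => |f' u| ^ q)) :
    ∀ x ∈ Set.Icc a b, ∀ lam ∈ Set.Icc (0:ℝ) 1,
      |(1 - lam) * f (m * x) +
          lam * (((x - a) * f (m * a) + (b - x) * f (m * b)) / (b - a)) -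
          (1 / (m * (b - a))) * ∫ t in (m * a)..(m * b), f t| ≤
        m * (∫ t in (0:ℝ)..1, |t - lam| ^ (q / (q - 1))) ^ (1 / (q / (q - 1))) / (b - a) *
          ((x - a) ^ 2 * ((|f' (m * x)| ^ q + α * m * |f' a| ^ q) / (α + 1)) ^ (1 / q) +
            (b - x) ^ 2 * ((|f' (m * x)| ^ q + α * m * |f' b| ^ q) / (α + 1)) ^ (1 / q)) := by
  obtain ⟨hm0, hm1⟩ := hm
  obtain ⟨hα0, hα1⟩ := hα
  intro x hx lam hlam
  obtain ⟨hxa, hxb⟩ := hx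
  have hIsub : Set.Icc (m*a) b ⊆ interior I := hI.interior.out hma hb
  have hma0 : 0 ≤ m*a := hI0 (interior_subset hma)
  have ha0 : 0 ≤ a := le_of_mul_le_mul_left (by rw [mul_zero]; exact hma0) hm0
  have hb0 : 0 ≤ b := le_trans ha0 hab.le
  have h1 : m*a ≤ m*x := by nlinarith
  have h2 : m*x ≤ m*b := by nlinarith
  have h3 : m*b ≤ b := by nlinarith
  have h4 : m*a ≤ a := by nlinarith
  have hICC : Set.Icc (m*a) (m*b) ⊆ interior I := fun y hy => hIsub ⟨hy.1, le_trans hy.2 h3⟩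
  have hfc : ContinuousOn f (Set.Icc (m*a) (m*b)) := fun y hy =>
    ((hf y (hICC hy)).continuousAt).continuousWithinAt
  have hfint : IntervalIntegrable f volume (m*a) (m*b) := by
    apply ContinuousOn.intervalIntegrable
    rwa [Set.uIcc_of_le (h1.trans h2)]
  set Kp := (∫ t in (0:ℝ)..1, |t - lam| ^ (q / (q - 1))) ^ (1 / (q / (q - 1))) with hKp
  have key : ∀ v : ℝ, m*a ≤ m*v → m*v ≤ m*b → v ∈ Set.Icc (m*a) b →
      ((∫ t in (0:ℝ)..1, (t - lam) * ((m*(x-v)) * f' ((m*(x-v))*t + m*v))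
          = (1-lam) * f (m*x) + lam * f (m*v)
            - ∫ t in (0:ℝ)..1, f ((m*(x-v))*t + m*v))
      ∧ (m*(x-v)) * ∫ t in (0:ℝ)..1, f ((m*(x-v))*t + m*v) = ∫ t in (m*v)..(m*x), f t
      ∧ |∫ t in (0:ℝ)..1, (t - lam) * ((m*(x-v)) * f' ((m*(x-v))*t + m*v))| ≤
          m * |x - v| *
            (Kp * ((|f' (m*x)| ^ q + α * m * |f' v| ^ q) / (α + 1)) ^ (1/q))) := by
    intro v hv1 hv2 hvmem
    set c := m*(x-v) with hc
    set d := m*v with hd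
    have hcd1 : c * 1 + d = m*x := by rw [hc, hd]; ring
    have hcd0 : c * 0 + d = m*v := by rw [hc, hd]; ring
    have hce : c = m*x - d := by linarith [hcd1]
    have hmem : ∀ t ∈ Set.Icc (0:ℝ) 1, c*t+d ∈ Set.Icc (m*a) (m*b) := by
      intro t ht
      rw [hce]
      constructor
      · nlinarith [mul_nonneg ht.1 (sub_nonneg.2 h1),
          mul_nonneg (sub_nonneg.2 ht.2) (sub_nonneg.2 hv1)]
      · nlinarith [mul_nonneg ht.1 (sub_nonneg.2 h2),
          mul_nonneg (sub_nonneg.2 ht.2) (sub_nonneg.2 hv2)]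
    have hsubI : Set.uIcc (m*v) (m*x) ⊆ Set.uIcc (m*a) (m*b) := by
      rw [Set.uIcc_of_le (h1.trans h2)]
      exact Set.uIcc_subset_Icc ⟨hv1, hv2⟩ ⟨h1, h2⟩
    have hint_g : IntervalIntegrable (fun t => f' (c*t+d)) volume 0 1 := by
      apply comp_affine_II_s12
      rw [hd, show c + d = m*x by rw [hc, hd]; ring]
      exact hint.mono_set hsubI
    have hderiv : ∀ t ∈ Set.uIcc (0:ℝ) 1,
        HasDerivAt (fun s => f (c*s+d)) (c * f' (c*t+d)) t := by
      intro t ht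
      rw [Set.uIcc_of_le zero_le_one] at ht
      have hw := hf _ (hICC (hmem t ht))
      have haff : HasDerivAt (fun s : ℝ => c*s+d) c t := by
        simpa using ((hasDerivAt_id t).const_mul c).add_const d
      have := hw.comp t haff
      rw [show c * f' (c*t+d) = f' (c*t+d) * c by ring]; exact this
    have hid := ibp_aux (fun s => f (c*s+d)) (fun t => c * f' (c*t+d)) lam hderiv
      (hint_g.const_mul c)
    simp only [hcd1, hcd0] at hid
    refine ⟨hid, ?_, ?_⟩
    · have hsub := intervalIntegral.smul_integral_comp_mul_add (a := (0:ℝ)) (b := 1) f c d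
      rw [hcd0, hcd1] at hsub
      simpa [smul_eq_mul] using hsub
    · -- the bound
      have hbnd : ∀ t ∈ Set.Icc (0:ℝ) 1,
          |f' (c*t+d)| ^ q ≤ t^α * |f' (m*x)|^q + m*(1-t^α) * |f' v|^q := by
        intro t ht
        have harg : t*(m*x) + m*(1-t)*v = c*t+d := by rw [hc, hd]; ring
        have hmm := hmem t ht
        have h := hconv (m*x) ⟨h1, le_trans h2 h3⟩ v hvmem t ht
          (by rw [harg]; exact ⟨hmm.1, le_trans hmm.2 h3⟩)
        rw [harg] at h
        exact h
      have hstep1 : |∫ t in (0:ℝ)..1, (t - lam) * (c * f' (c*t+d))| ≤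
          ∫ t in (0:ℝ)..1, |(t - lam) * (c * f' (c*t+d))| :=
        intervalIntegral.abs_integral_le_integral_abs zero_le_one
      have hstep2 : ∫ t in (0:ℝ)..1, |(t - lam) * (c * f' (c*t+d))|
          = |c| * ∫ t in (0:ℝ)..1, |t - lam| * |f' (c*t+d)| := by
        rw [← intervalIntegral.integral_const_mul]
        apply intervalIntegral.integral_congr
        intro t _
        simp only [abs_mul]
        ring
      have hstep3 := holder_bound hint_g hq hlam hα0 (Real.rpow_nonneg (abs_nonneg _) q)
        (Real.rpow_nonneg (abs_nonneg _) q) hm0.le hbnd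
      have hcabs : |c| = m * |x - v| := by rw [hc, abs_mul, abs_of_pos hm0]
      calc |∫ t in (0:ℝ)..1, (t - lam) * (c * f' (c*t+d))|
          ≤ |c| * ∫ t in (0:ℝ)..1, |t - lam| * |f' (c*t+d)| := by rw [← hstep2]; exact hstep1
        _ ≤ |c| * (Kp * ((|f' (m*x)| ^ q + α * m * |f' v| ^ q) / (α + 1)) ^ (1/q)) :=
            mul_le_mul_of_nonneg_left hstep3 (abs_nonneg _)
        _ = m * |x - v| * (Kp * ((|f' (m*x)| ^ q + α * m * |f' v| ^ q) / (α + 1)) ^ (1/q)) := by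
            rw [hcabs]
  obtain ⟨idA, subA, bndA⟩ := key a (le_refl _) (by nlinarith) ⟨h4, hab.le⟩
  obtain ⟨idB, subB, bndB⟩ := key b (by nlinarith) (le_refl _) ⟨h4.trans hab.le, le_refl _⟩
  set Ia := ∫ t in (0:ℝ)..1, (t - lam) * ((m*(x-a)) * f' ((m*(x-a))*t + m*a)) with hIa
  set Ib := ∫ t in (0:ℝ)..1, (t - lam) * ((m*(x-b)) * f' ((m*(x-b))*t + m*b)) with hIb
  set Ja := ∫ t in (0:ℝ)..1, f ((m*(x-a))*t + m*a) with hJa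
  set Jb := ∫ t in (0:ℝ)..1, f ((m*(x-b))*t + m*b) with hJb
  set J1 := ∫ t in (m*a)..(m*x), f t with hJ1
  set J2 := ∫ t in (m*x)..(m*b), f t with hJ2
  have hsubA' : Set.uIcc (m*a) (m*x) ⊆ Set.uIcc (m*a) (m*b) := by
    rw [Set.uIcc_of_le (h1.trans h2)]
    exact Set.uIcc_subset_Icc ⟨le_refl _, h1.trans h2⟩ ⟨h1, h2⟩
  have hsubB' : Set.uIcc (m*x) (m*b) ⊆ Set.uIcc (m*a) (m*b) := by
    rw [Set.uIcc_of_le (h1.trans h2)]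
    exact Set.uIcc_subset_Icc ⟨h1, h2⟩ ⟨h1.trans h2, le_refl _⟩
  have hJ : ∫ t in (m*a)..(m*b), f t = J1 + J2 :=
    (intervalIntegral.integral_add_adjacent_intervals
      (hfint.mono_set hsubA') (hfint.mono_set hsubB')).symm
  have subB2 : (m*(x-b)) * Jb = -J2 := by
    rw [subB, hJ2, ← intervalIntegral.integral_symm]
  have hba : b - a ≠ 0 := by linarith
  have hmne : m ≠ 0 := ne_of_gt hm0
  have e1 : (x-a) * Ja = J1 / m := by
    field_simp
    linear_combination subA
  have e2 : (b-x) * Jb = J2 / m := by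
    field_simp
    linear_combination -subB2
  have key_eq : (x-a) * Ia + (b-x) * Ib
      = (b-a)*(1-lam)*f (m*x) + lam*((x-a)*f (m*a) + (b-x)*f (m*b)) - (J1 + J2)/m := by
    rw [idA, idB]
    linear_combination (-1 : ℝ) * e1 + (-1 : ℝ) * e2
  have hS : (1 - lam) * f (m * x) +
      lam * (((x - a) * f (m * a) + (b - x) * f (m * b)) / (b - a)) -
      (1 / (m * (b - a))) * ∫ t in (m * a)..(m * b), f t
      = ((x-a) * Ia + (b-x) * Ib) / (b-a) := by
    rw [hJ, key_eq]
    field_simp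
  rw [hS]
  have hbndA : |Ia| ≤ m * (x-a) * (Kp * ((|f' (m*x)| ^ q + α * m * |f' a| ^ q) / (α + 1)) ^ (1/q)) := by
    rw [abs_of_nonneg (sub_nonneg.2 hxa)] at bndA; exact bndA
  have hbndB : |Ib| ≤ m * (b-x) * (Kp * ((|f' (m*x)| ^ q + α * m * |f' b| ^ q) / (α + 1)) ^ (1/q)) := by
    rw [abs_sub_comm, abs_of_nonneg (sub_nonneg.2 hxb)] at bndB; exact bndB
  have hKnn : 0 ≤ Kp := Real.rpow_nonneg
    (intervalIntegral.integral_nonneg zero_le_one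
      (fun t _ => Real.rpow_nonneg (abs_nonneg _) _)) _
  set Qa := ((|f' (m*x)| ^ q + α * m * |f' a| ^ q) / (α + 1)) ^ (1/q) with hQa
  set Qb := ((|f' (m*x)| ^ q + α * m * |f' b| ^ q) / (α + 1)) ^ (1/q) with hQb
  have hQann : 0 ≤ Qa := Real.rpow_nonneg (by positivity) _
  have hQbnn : 0 ≤ Qb := Real.rpow_nonneg (by positivity) _
  calc |((x-a) * Ia + (b-x) * Ib) / (b-a)|
      = |(x-a) * Ia + (b-x) * Ib| / (b-a) := by
        rw [abs_div, abs_of_pos (by linarith : (0:ℝ) < b - a)]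
    _ ≤ ((x-a) * |Ia| + (b-x) * |Ib|) / (b-a) := by
        refine (div_le_div_iff_of_pos_right (by linarith : (0:ℝ) < b - a)).mpr ?_
        calc |(x-a) * Ia + (b-x) * Ib| ≤ |(x-a) * Ia| + |(b-x) * Ib| := abs_add_le _ _
          _ = (x-a) * |Ia| + (b-x) * |Ib| := by
              rw [abs_mul, abs_mul, abs_of_nonneg (sub_nonneg.2 hxa),
                abs_of_nonneg (sub_nonneg.2 hxb)]
    _ ≤ ((x-a) * (m * (x-a) * (Kp * Qa)) + (b-x) * (m * (b-x) * (Kp * Qb))) / (b-a) := by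
        refine (div_le_div_iff_of_pos_right (by linarith : (0:ℝ) < b - a)).mpr ?_
        exact add_le_add (mul_le_mul_of_nonneg_left hbndA (sub_nonneg.2 hxa))
          (mul_le_mul_of_nonneg_left hbndB (sub_nonneg.2 hxb))
    _ = m * Kp / (b - a) * ((x - a) ^ 2 * Qa + (b - x) ^ 2 * Qb) := by
        field_simp
end

section
/- Let f : I ⊂ [0,∞) → ℝ be differentiable on I°, m ∈ (0,1], ma, b ∈ I° with a < b, and suppose f' is integrable on [ma, mb]. If |f'|^q is (α,m)-convex on [ma,b] for some fixed q > 1 and (α,m) ∈ [0,1]², then for every θ > 0, with p = q/(q−1), the Simpson-type inequality holds: |(1/6)[f(ma) + 4 f(m(a+b)/2) + f(mb)] − (Γ(θ+1) 2^{θ−1}/(m^θ (b−a)^θ)) [J_{(m(a+b)/2)−}^θ f(ma) + J_{(m(a+b)/2)+}^θ f(mb)]| ≤ (m(b−a)/4) (∫₀¹ |t^θ − 1/3|^p dt)^{1/p} { ((|f'(m(a+b)/2)|^q + αm |f'(a)|^q)/(α+1))^{1/q} + ((|f'(m(a+b)/2)|^q + αm |f'(b)|^q)/(α+1))^{1/q}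 }. -/
open MeasureTheory Set intervalIntegral Real

section Helpers

lemma subst_left (θ A B : ℝ) (hB : 0 < B) (f : ℝ → ℝ) :
    ∫ t in (0:ℝ)..1, t ^ (θ-1) * f (A + t*B)
      = B^(-θ) * ∫ u in A..(A+B), (u - A)^(θ-1) * f u := by
  have h1 : EqOn (fun t : ℝ => B^(θ-1) * (t ^ (θ-1) * f (A + t*B)))
      (fun t : ℝ => (B*t + A - A)^(θ-1) * f (B*t + A)) (Set.uIcc 0 1) := by
    intro t ht
    rw [Set.uIcc_of_le zero_le_one] at ht
    simp only [add_sub_cancel_right]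
    rw [Real.mul_rpow hB.le ht.1, mul_assoc]
    ring_nf
  have h2 : (∫ t in (0:ℝ)..1, (B*t + A - A)^(θ-1) * f (B*t + A))
      = B⁻¹ • ∫ u in (B*0 + A)..(B*1 + A), (u - A)^(θ-1) * f u := by
    exact intervalIntegral.integral_comp_mul_add (fun u => (u - A)^(θ-1) * f u) hB.ne' A
  simp only [mul_zero, zero_add, mul_one, smul_eq_mul] at h2
  have h3 : B^(θ-1) * ∫ t in (0:ℝ)..1, t ^ (θ-1) * f (A + t*B)
      = B⁻¹ * ∫ u in A..(B + A), (u - A)^(θ-1) * f u := by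
    rw [← intervalIntegral.integral_const_mul, intervalIntegral.integral_congr h1, h2]
  have hBpow : B ^ (θ-1) ≠ 0 := (Real.rpow_pos_of_pos hB _).ne'
  have h4 : (B^(θ-1))⁻¹ * (B^(θ-1) * ∫ t in (0:ℝ)..1, t ^ (θ-1) * f (A + t*B))
      = (B^(θ-1))⁻¹ * (B⁻¹ * ∫ u in A..(B + A), (u - A)^(θ-1) * f u) := by rw [h3]
  rw [← mul_assoc, inv_mul_cancel₀ hBpow, one_mul, ← mul_assoc] at h4
  rw [h4, add_comm B A]
  congr 1
  rw [← Real.rpow_neg_one B, ← Real.rpow_neg hB.le, ← Real.rpow_add hB]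
  ring_nf

lemma subst_right (θ A B : ℝ) (hB : 0 < B) (f : ℝ → ℝ) :
    ∫ t in (0:ℝ)..1, t ^ (θ-1) * f (A - t*B)
      = B^(-θ) * ∫ u in (A-B)..A, (A - u)^(θ-1) * f u := by
  have h1 : EqOn (fun t : ℝ => B^(θ-1) * (t ^ (θ-1) * f (A - t*B)))
      (fun t : ℝ => (A - ((-B)*t + A))^(θ-1) * f ((-B)*t + A)) (Set.uIcc 0 1) := by
    intro t ht
    rw [Set.uIcc_of_le zero_le_one] at ht
    have e1 : A - ((-B)*t + A) = B * t := by ring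
    have e2 : (-B)*t + A = A - t*B := by ring
    simp only []
    rw [e1, e2, Real.mul_rpow hB.le ht.1, mul_assoc]
  have h2 : (∫ t in (0:ℝ)..1, (A - ((-B)*t + A))^(θ-1) * f ((-B)*t + A))
      = (-B)⁻¹ • ∫ u in ((-B)*0 + A)..((-B)*1 + A), (A - u)^(θ-1) * f u := by
    exact intervalIntegral.integral_comp_mul_add (fun u => (A - u)^(θ-1) * f u)
      (neg_ne_zero.mpr hB.ne') A
  simp only [mul_zero, zero_add, mul_one, smul_eq_mul] at h2
  have e3 : -B + A = A - B := by ring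
  rw [e3, intervalIntegral.integral_symm (A-B) A] at h2
  have h3 : B^(θ-1) * ∫ t in (0:ℝ)..1, t ^ (θ-1) * f (A - t*B)
      = B⁻¹ * ∫ u in (A-B)..A, (A - u)^(θ-1) * f u := by
    rw [← intervalIntegral.integral_const_mul, intervalIntegral.integral_congr h1, h2]
    field_simp
  have hBpow : B ^ (θ-1) ≠ 0 := (Real.rpow_pos_of_pos hB _).ne'
  have h4 : (B^(θ-1))⁻¹ * (B^(θ-1) * ∫ t in (0:ℝ)..1, t ^ (θ-1) * f (A - t*B))
      = (B^(θ-1))⁻¹ * (B⁻¹ * ∫ u in (A-B)..A, (A - u)^(θ-1) * f u) := by rw [h3]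
  rw [← mul_assoc, inv_mul_cancel₀ hBpow, one_mul, ← mul_assoc] at h4
  rw [h4]
  congr 1
  rw [← Real.rpow_neg_one B, ← Real.rpow_neg hB.le, ← Real.rpow_add hB]
  ring_nf

lemma ibp_kernel (θ : ℝ) (hθ : 0 < θ) (F F' : ℝ → ℝ)
    (hF : ∀ t ∈ Set.uIcc (0:ℝ) 1, HasDerivAt F (F' t) t)
    (hFint : IntervalIntegrable F' volume 0 1) :
    ∫ t in (0:ℝ)..1, (t^θ - 1/3) * F' t
      = (2/3) * F 1 + (1/3) * F 0 - θ * ∫ t in (0:ℝ)..1, t^(θ-1) * F t := by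
  have hu : ContinuousOn (fun t : ℝ => t^θ - 1/3) (Set.uIcc 0 1) := by
    intro t _
    exact ((Real.continuousAt_rpow_const t θ (Or.inr hθ.le)).sub
      continuousAt_const).continuousWithinAt
  have hv : ContinuousOn F (Set.uIcc 0 1) := fun t ht => (hF t ht).continuousAt.continuousWithinAt
  have huu' : ∀ t ∈ Set.Ioo (min (0:ℝ) 1) (max 0 1),
      HasDerivWithinAt (fun t : ℝ => t^θ - 1/3) (θ * t^(θ-1)) (Set.Ioi t) t := by
    intro t ht
    rw [min_eq_left zero_le_one, max_eq_right zero_le_one] at ht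
    exact ((Real.hasDerivAt_rpow_const (p := θ) (Or.inl ht.1.ne')).sub_const _).hasDerivWithinAt
  have hvv' : ∀ t ∈ Set.Ioo (min (0:ℝ) 1) (max 0 1),
      HasDerivWithinAt F (F' t) (Set.Ioi t) t := by
    intro t ht
    rw [min_eq_left zero_le_one, max_eq_right zero_le_one] at ht
    exact (hF t (by rw [Set.uIcc_of_le zero_le_one]; exact Set.Ioo_subset_Icc_self ht)
      ).hasDerivWithinAt
  have hu' : IntervalIntegrable (fun t : ℝ => θ * t^(θ-1)) volume 0 1 :=
    (intervalIntegral.intervalIntegrable_rpow' (by linarith)).const_mul θ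
  have key := intervalIntegral.integral_mul_deriv_eq_deriv_mul_of_hasDeriv_right
    hu hv huu' hvv' hu' hFint
  rw [key]
  rw [Real.one_rpow, Real.zero_rpow hθ.ne']
  have : (∫ t in (0:ℝ)..1, θ * t^(θ-1) * F t) = θ * ∫ t in (0:ℝ)..1, t^(θ-1) * F t := by
    rw [← intervalIntegral.integral_const_mul]
    congr 1; funext t; ring
  rw [this]; ring

lemma comp_affine_int (f : ℝ → ℝ) (A B : ℝ) (hB : B ≠ 0)
    (h : IntervalIntegrable f volume A (A+B)) :
    IntervalIntegrable (fun t => f (A + t*B)) volume 0 1 := by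
  have h1 := h.comp_add_right A
  have h1' : IntervalIntegrable (fun x => f (x + A)) volume 0 B := by
    have e1 : A - A = 0 := by ring
    have e2 : A + B - A = B := by ring
    rwa [e1, e2] at h1
  have h2 := h1'.comp_mul_left (c := B)
  have h2' : IntervalIntegrable (fun t => f (B*t + A)) volume 0 1 := by
    rwa [zero_div, div_self hB] at h2
  have e : (fun t : ℝ => f (B*t + A)) = fun t => f (A + t*B) := by
    funext t; ring_nf
  rwa [e] at h2'

lemma hoelder_step (θ q α m X Y : ℝ) (hθ : 0 < θ) (hq : 1 < q) (hα0 : 0 ≤ α)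
    (hm : 0 < m) (hX : 0 ≤ X) (hY : 0 ≤ Y) (g : ℝ → ℝ)
    (hg : IntervalIntegrable g volume 0 1)
    (hbound : ∀ t ∈ Set.Ioc (0:ℝ) 1, |g t| ^ q ≤ t^α * X + m * (1 - t^α) * Y) :
    |∫ t in (0:ℝ)..1, (t^θ - 1/3) * g t| ≤
      (∫ t in (0:ℝ)..1, |t^θ - 1/3| ^ (q/(q-1))) ^ (1/(q/(q-1))) * ((X + α*m*Y)/(α+1)) ^ (1/q) := by
  set μ := volume.restrict (Set.Ioc (0:ℝ) 1) with hμ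
  haveI : IsFiniteMeasure μ := by
    constructor
    rw [hμ, Measure.restrict_apply_univ, Real.volume_Ioc]
    exact ENNReal.ofReal_lt_top
  have hq0 : 0 < q := lt_trans one_pos hq
  have hp : (q/(q-1)).HolderConjugate q := (Real.HolderConjugate.conjExponent hq).symm
  have hKcont : Continuous (fun t : ℝ => t^θ - 1/3) :=
    (continuous_iff_continuousAt.2 fun t =>
      Real.continuousAt_rpow_const t θ (Or.inr hθ.le)).sub continuous_const
  have hgInt : Integrable g μ := hg.1
  have hqcont : Continuous (fun x : ℝ => |x| ^ q) :=
    (continuous_iff_continuousAt.2 fun y =>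
      Real.continuousAt_rpow_const y q (Or.inr hq0.le)).comp continuous_abs
  have hKmem : MemLp (fun t => |t^θ - 1/3|) (ENNReal.ofReal (q/(q-1))) μ := by
    refine MemLp.of_bound hKcont.abs.aestronglyMeasurable 1 ?_
    filter_upwards [ae_restrict_mem measurableSet_Ioc] with t ht
    rw [Real.norm_eq_abs, abs_abs]
    have h1 : 0 ≤ t^θ := Real.rpow_nonneg ht.1.le _
    have h2 : t^θ ≤ 1 := Real.rpow_le_one ht.1.le ht.2 hθ.le
    rw [abs_le]; constructor <;> linarith
  have habs : ∀ t ∈ Set.Ioc (0:ℝ) 1, |g t| ≤ (X + m*Y) ^ (1/q) := by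
    intro t ht
    have h1 : 0 ≤ t^α := Real.rpow_nonneg ht.1.le _
    have h2 : t^α ≤ 1 := Real.rpow_le_one ht.1.le ht.2 hα0
    have h3 : |g t| ^ q ≤ X + m*Y := by
      have := hbound t ht
      nlinarith [mul_nonneg (sub_nonneg.2 h2) hX, mul_nonneg (mul_nonneg hm.le h1) hY]
    calc |g t| = (|g t| ^ q) ^ (1/q) := by
          rw [← Real.rpow_mul (abs_nonneg _), mul_one_div_cancel hq0.ne', Real.rpow_one]
      _ ≤ (X + m*Y) ^ (1/q) :=
          Real.rpow_le_rpow (Real.rpow_nonneg (abs_nonneg _) _) h3 (by positivity)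
  have hgabs : AEStronglyMeasurable (fun t => |g t|) μ := by
    have := hgInt.aestronglyMeasurable.norm
    simpa [Real.norm_eq_abs] using this
  have hgmem : MemLp (fun t => |g t|) (ENNReal.ofReal q) μ := by
    refine MemLp.of_bound hgabs ((X + m*Y) ^ (1/q)) ?_
    filter_upwards [ae_restrict_mem measurableSet_Ioc] with t ht
    rw [Real.norm_eq_abs, abs_abs]
    exact habs t ht
  have holder := MeasureTheory.integral_mul_le_Lp_mul_Lq_of_nonneg hp
    (Filter.Eventually.of_forall fun t => abs_nonneg _)
    (Filter.Eventually.of_forall fun t => abs_nonneg _) hKmem hgmem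
  have step1 : |∫ t in (0:ℝ)..1, (t^θ - 1/3) * g t| ≤ ∫ t, |t^θ - 1/3| * |g t| ∂μ := by
    refine le_trans (intervalIntegral.abs_integral_le_integral_abs zero_le_one) ?_
    rw [intervalIntegral.integral_of_le zero_le_one]
    exact le_of_eq (by congr 1; funext t; rw [abs_mul])
  have hrpowInt : Integrable (fun t : ℝ => t ^ α) μ :=
    (intervalIntegral.intervalIntegrable_rpow' (by linarith)).1
  have hbint : Integrable (fun t : ℝ => t^α * X + m * (1 - t^α) * Y) μ := by
    have h : (fun t : ℝ => t^α * X + m * (1 - t^α) * Y)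
        = fun t => (X - m*Y) * t^α + m*Y := by funext t; ring
    rw [h]
    exact (hrpowInt.const_mul _).add (integrable_const _)
  have hgqInt : Integrable (fun t => |g t| ^ q) μ := by
    refine hbint.mono' (hqcont.comp_aestronglyMeasurable hgInt.aestronglyMeasurable) ?_
    filter_upwards [ae_restrict_mem measurableSet_Ioc] with t ht
    rw [Real.norm_eq_abs, abs_of_nonneg (Real.rpow_nonneg (abs_nonneg _) _)]
    exact hbound t ht
  have hint_val : ∫ t, (t^α * X + m * (1 - t^α) * Y) ∂μ = (X + α*m*Y)/(α+1) := by
    have h : (fun t : ℝ => t^α * X + m * (1 - t^α) * Y)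
        = fun t => (X - m*Y) * t^α + m*Y := by funext t; ring
    rw [h, integral_add ((hrpowInt.const_mul _)) (integrable_const _),
      MeasureTheory.integral_const_mul, MeasureTheory.integral_const]
    have hIα : ∫ t, t ^ α ∂μ = 1/(α+1) := by
      rw [← intervalIntegral.integral_of_le zero_le_one, integral_rpow (Or.inl (by linarith))]
      rw [Real.one_rpow, Real.zero_rpow (by linarith : α + 1 ≠ 0)]
      norm_num
    rw [hIα]
    simp only [hμ, Measure.real, Measure.restrict_apply_univ, Real.volume_Ioc, smul_eq_mul]
    rw [ENNReal.toReal_ofReal (by norm_num : (0:ℝ) ≤ 1 - 0)]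
    field_simp
    ring
  have hgq_le : ∫ t, |g t| ^ q ∂μ ≤ (X + α*m*Y)/(α+1) := by
    rw [← hint_val]
    refine integral_mono_ae hgqInt hbint ?_
    filter_upwards [ae_restrict_mem measurableSet_Ioc] with t ht
    exact hbound t ht
  have hKp_nonneg : 0 ≤ (∫ t, |t^θ - 1/3| ^ (q/(q-1)) ∂μ) ^ (1/(q/(q-1))) :=
    Real.rpow_nonneg (integral_nonneg fun t => Real.rpow_nonneg (abs_nonneg _) _) _
  have step3 : (∫ t, |g t| ^ q ∂μ) ^ (1/q) ≤ ((X + α*m*Y)/(α+1)) ^ (1/q) :=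
    Real.rpow_le_rpow (integral_nonneg fun t => Real.rpow_nonneg (abs_nonneg _) _)
      hgq_le (by positivity)
  calc |∫ t in (0:ℝ)..1, (t^θ - 1/3) * g t|
      ≤ ∫ t, |t^θ - 1/3| * |g t| ∂μ := step1
    _ ≤ (∫ t, |t^θ - 1/3| ^ (q/(q-1)) ∂μ) ^ (1/(q/(q-1))) * (∫ t, |g t| ^ q ∂μ) ^ (1/q) := holder
    _ ≤ (∫ t, |t^θ - 1/3| ^ (q/(q-1)) ∂μ) ^ (1/(q/(q-1))) * ((X + α*m*Y)/(α+1)) ^ (1/q) :=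
        mul_le_mul_of_nonneg_left step3 hKp_nonneg
    _ = (∫ t in (0:ℝ)..1, |t^θ - 1/3| ^ (q/(q-1))) ^ (1/(q/(q-1)))
          * ((X + α*m*Y)/(α+1)) ^ (1/q) := by
        rw [intervalIntegral.integral_of_le zero_le_one]

end Helpers

set_option maxHeartbeats 1000000 in
theorem simpson_holder
    (I : Set ℝ) (hI : Set.OrdConnected I) (hI0 : I ⊆ Set.Ici (0:ℝ)) (f f' : ℝ → ℝ) (m a b : ℝ)
    (hm : m ∈ Set.Ioc (0:ℝ) 1) (hab : a < b)
    (hma : m * a ∈ interior I) (hb : b ∈ interior I)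
    (hf : ∀ y ∈ interior I, HasDerivAt f (f' y) y)
    (hint : IntervalIntegrable f' MeasureTheory.volume (m * a) (m * b))
    (α q : ℝ) (hα : α ∈ Set.Icc (0:ℝ) 1) (hq : 1 < q)
    (hconv : AlphaMConvexOn α m (m * a) b (fun u => |f' u| ^ q)) :
    ∀ θ : ℝ, 0 < θ →
      |(1 / 6) * (f (m * a) + 4 * f (m * (a + b) / 2) + f (m * b)) -
          Real.Gamma (θ + 1) * 2 ^ (θ - 1) / (m ^ θ * (b - a) ^ θ) *
            (rlLeft θ (m * a) (m * (a + b) / 2) f + rlRight θ (m * (a + b) / 2) (m * b) f)| ≤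
        m * (b - a) / 4 *
            (∫ t in (0:ℝ)..1, |t ^ θ - 1 / 3| ^ (q / (q - 1))) ^ (1 / (q / (q - 1))) *
          (((|f' (m * (a + b) / 2)| ^ q + α * m * |f' a| ^ q) / (α + 1)) ^ (1 / q) +
            ((|f' (m * (a + b) / 2)| ^ q + α * m * |f' b| ^ q) / (α + 1)) ^ (1 / q)) := by
  intro θ hθ
  obtain ⟨hm0, hm1⟩ := hm
  obtain ⟨hα0, hα1⟩ := hα
  have ha0 : 0 ≤ a := by
    have h1 : (0:ℝ) ≤ m * a := hI0 (interior_subset hma)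
    exact (mul_nonneg_iff_of_pos_left hm0).mp h1
  have hb0 : 0 < b := lt_of_le_of_lt ha0 hab
  have hba : 0 < b - a := sub_pos.2 hab
  set c := m * (a + b) / 2 with hc
  set B := m * (b - a) / 2 with hB
  have hBpos : 0 < B := by rw [hB]; positivity
  have hcma : m * a + B = c := by rw [hB, hc]; ring
  have hcmb : c + B = m * b := by rw [hB, hc]; ring
  have hmaa : m * a ≤ a := by nlinarith
  have hmbb : m * b ≤ b := by nlinarith
  have hmamb : m * a ≤ m * b := by nlinarith
  have hmab : m * a ≤ b := le_trans hmaa hab.le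
  have hIcc : Set.Icc (m * a) b ⊆ interior I := hI.interior.out hma hb
  have hf' : ∀ x ∈ Set.Icc (m * a) b, HasDerivAt f (f' x) x := fun x hx => hf x (hIcc hx)
  have hcmem : c ∈ Set.Icc (m * a) b := ⟨by nlinarith, by nlinarith⟩
  have hamem : a ∈ Set.Icc (m * a) b := ⟨hmaa, hab.le⟩
  have hbmem : b ∈ Set.Icc (m * a) b := ⟨hmab, le_refl b⟩
  -- integrability of composed functions
  have hint1 : IntervalIntegrable f' volume (m * a) (m * a + B) := by
    refine hint.mono_set ?_
    rw [Set.uIcc_of_le hmamb, Set.uIcc_of_le (by linarith : m * a ≤ m * a + B)]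
    exact Set.Icc_subset_Icc le_rfl (by rw [hcma, ← hcmb]; linarith)
  have hint2 : IntervalIntegrable f' volume (m * b) (m * b + -B) := by
    refine (hint.symm.mono_set ?_)
    rw [Set.uIcc_of_ge hmamb, Set.uIcc_of_ge (by linarith : m * b + -B ≤ m * b)]
    refine Set.Icc_subset_Icc ?_ le_rfl
    have : m * b + -B = c := by rw [← hcmb]; ring
    rw [this, ← hcma]; linarith
  have hg1int : IntervalIntegrable (fun t => f' (m * a + t * B)) volume 0 1 :=
    comp_affine_int f' (m * a) B hBpos.ne' hint1
  have hg2int : IntervalIntegrable (fun t => f' (m * b - t * B)) volume 0 1 := by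
    have h := comp_affine_int f' (m * b) (-B) (neg_ne_zero.mpr hBpos.ne') hint2
    have e : (fun t : ℝ => f' (m * b + t * -B)) = fun t => f' (m * b - t * B) := by
      funext t; ring_nf
    rwa [e] at h
  -- derivatives of composed functions
  have hF1 : ∀ t ∈ Set.uIcc (0:ℝ) 1,
      HasDerivAt (fun s => f (m * a + s * B)) (B * f' (m * a + t * B)) t := by
    intro t ht
    rw [Set.uIcc_of_le zero_le_one] at ht
    have harg : m * a + t * B ∈ Set.Icc (m * a) b := by
      constructor
      · linarith [mul_nonneg ht.1 hBpos.le]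
      · have h1 : t * B ≤ B := mul_le_of_le_one_left hBpos.le ht.2
        have := hcmem.2
        linarith
    have hg : HasDerivAt (fun s : ℝ => m * a + s * B) B t := by
      simpa using ((hasDerivAt_id t).mul_const B).const_add (m * a)
    have := (hf' _ harg).comp t hg
    simpa [mul_comm, Function.comp_def] using this
  have hF2 : ∀ t ∈ Set.uIcc (0:ℝ) 1,
      HasDerivAt (fun s => f (m * b - s * B)) (-B * f' (m * b - t * B)) t := by
    intro t ht
    rw [Set.uIcc_of_le zero_le_one] at ht
    have harg : m * b - t * B ∈ Set.Icc (m * a) b := by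
      constructor
      · have h1 : t * B ≤ B := mul_le_of_le_one_left hBpos.le ht.2
        have := hcmem.1
        rw [← hcmb]; linarith
      · linarith [mul_nonneg ht.1 hBpos.le]
    have hg : HasDerivAt (fun s : ℝ => m * b - s * B) (-B) t := by
      simpa using ((hasDerivAt_id t).mul_const B).const_sub (m * b)
    have := (hf' _ harg).comp t hg
    simpa [mul_comm, Function.comp_def] using this
  -- IBP identities
  have hGpos : 0 < Real.Gamma θ := Real.Gamma_pos_of_pos hθ
  have hL : B * (∫ t in (0:ℝ)..1, (t^θ - 1/3) * f' (m * a + t * B))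
      = (2/3) * f c + (1/3) * f (m * a)
        - θ * Real.Gamma θ * B^(-θ) * rlLeft θ (m * a) c f := by
    have h1 := ibp_kernel θ hθ (fun s => f (m * a + s * B))
      (fun t => B * f' (m * a + t * B)) hF1 (hg1int.const_mul B)
    have h2 : (∫ t in (0:ℝ)..1, (t^θ - 1/3) * (B * f' (m * a + t * B)))
        = B * ∫ t in (0:ℝ)..1, (t^θ - 1/3) * f' (m * a + t * B) := by
      rw [← intervalIntegral.integral_const_mul]
      congr 1; funext t; ring
    have h3 := subst_left θ (m * a) B hBpos f
    rw [h2] at h1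
    rw [hcma] at h3
    have h4 : (∫ u in (m*a)..c, (u - m*a)^(θ-1) * f u) = Real.Gamma θ * rlLeft θ (m * a) c f := by
      rw [rlLeft]
      field_simp
    rw [h4] at h3
    rw [h1, h3]
    simp only [one_mul, zero_mul, add_zero, mul_one]
    rw [hcma]
    ring
  have hR : -B * (∫ t in (0:ℝ)..1, (t^θ - 1/3) * f' (m * b - t * B))
      = (2/3) * f c + (1/3) * f (m * b)
        - θ * Real.Gamma θ * B^(-θ) * rlRight θ c (m * b) f := by
    have h1 := ibp_kernel θ hθ (fun s => f (m * b - s * B))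
      (fun t => -B * f' (m * b - t * B)) hF2 (hg2int.const_mul (-B))
    have h2 : (∫ t in (0:ℝ)..1, (t^θ - 1/3) * (-B * f' (m * b - t * B)))
        = -B * ∫ t in (0:ℝ)..1, (t^θ - 1/3) * f' (m * b - t * B) := by
      rw [← intervalIntegral.integral_const_mul]
      congr 1; funext t; ring
    have h3 := subst_right θ (m * b) B hBpos f
    rw [h2] at h1
    have e : m * b - B = c := by rw [← hcmb]; ring
    rw [e] at h3
    have h4 : (∫ u in c..(m*b), (m*b - u)^(θ-1) * f u)
        = Real.Gamma θ * rlRight θ c (m * b) f := by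
      rw [rlRight]
      field_simp
    rw [h4] at h3
    rw [h1, h3]
    simp only [one_mul, zero_mul, sub_zero, mul_one]
    rw [show m * b - B = c from by rw [← hcmb]; ring]
    ring
  -- coefficient identity
  have hD : Real.Gamma (θ + 1) * 2^(θ-1) / (m^θ * (b-a)^θ)
      = θ * Real.Gamma θ * B^(-θ) / 2 := by
    rw [Real.Gamma_add_one hθ.ne']
    have hBθ : B^(-θ) = 2^θ / (m^θ * (b-a)^θ) := by
      rw [Real.rpow_neg hBpos.le, hB, Real.div_rpow (by positivity) (by norm_num),
        Real.mul_rpow hm0.le hba.le, inv_div]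
    have h2 : (2:ℝ)^(θ-1) = 2^θ / 2 := by
      rw [Real.rpow_sub (by norm_num), Real.rpow_one]
    rw [hBθ, h2]
    ring
  -- main identity
  set I₁ := ∫ t in (0:ℝ)..1, (t^θ - 1/3) * f' (m * a + t * B) with hI₁
  set I₂ := ∫ t in (0:ℝ)..1, (t^θ - 1/3) * f' (m * b - t * B) with hI₂
  have hkey : (1 / 6) * (f (m * a) + 4 * f c + f (m * b)) -
      Real.Gamma (θ + 1) * 2 ^ (θ - 1) / (m ^ θ * (b - a) ^ θ) *
        (rlLeft θ (m * a) c f + rlRight θ c (m * b) f)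
      = (B * I₁ - B * I₂) / 2 := by
    rw [hD]
    linear_combination (-1/2 : ℝ) * hL - (1/2 : ℝ) * hR
  rw [hkey]
  -- Hölder bounds
  have hb1 : ∀ t ∈ Set.Ioc (0:ℝ) 1, |f' (m * a + t * B)| ^ q
      ≤ t^α * |f' c| ^ q + m * (1 - t^α) * |f' a| ^ q := by
    intro t ht
    have ht' : t ∈ Set.Icc (0:ℝ) 1 := ⟨ht.1.le, ht.2⟩
    have harg : t * c + m * (1 - t) * a = m * a + t * B := by rw [hc, hB]; ring
    have hmem : t * c + m * (1 - t) * a ∈ Set.Icc (m * a) b := by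
      rw [harg]
      constructor
      · linarith [mul_nonneg ht.1.le hBpos.le]
      · have h1 : t * B ≤ B := mul_le_of_le_one_left hBpos.le ht.2
        have := hcmem.2
        linarith
    have h := hconv c hcmem a hamem t ht' hmem
    simp only [] at h
    rwa [harg] at h
  have hb2 : ∀ t ∈ Set.Ioc (0:ℝ) 1, |f' (m * b - t * B)| ^ q
      ≤ t^α * |f' c| ^ q + m * (1 - t^α) * |f' b| ^ q := by
    intro t ht
    have ht' : t ∈ Set.Icc (0:ℝ) 1 := ⟨ht.1.le, ht.2⟩
    have harg : t * c + m * (1 - t) * b = m * b - t * B := by rw [hc, hB]; ring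
    have hmem : t * c + m * (1 - t) * b ∈ Set.Icc (m * a) b := by
      rw [harg]
      constructor
      · have h1 : t * B ≤ B := mul_le_of_le_one_left hBpos.le ht.2
        have := hcmem.1
        rw [← hcmb]; linarith
      · linarith [mul_nonneg ht.1.le hBpos.le]
    have h := hconv c hcmem b hbmem t ht' hmem
    simp only [] at h
    rwa [harg] at h
  have hH1 := hoelder_step θ q α m (|f' c| ^ q) (|f' a| ^ q) hθ hq hα0 hm0
    (Real.rpow_nonneg (abs_nonneg _) _) (Real.rpow_nonneg (abs_nonneg _) _)
    (fun t => f' (m * a + t * B)) hg1int hb1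
  have hH2 := hoelder_step θ q α m (|f' c| ^ q) (|f' b| ^ q) hθ hq hα0 hm0
    (Real.rpow_nonneg (abs_nonneg _) _) (Real.rpow_nonneg (abs_nonneg _) _)
    (fun t => f' (m * b - t * B)) hg2int hb2
  -- combine
  set Kp := (∫ t in (0:ℝ)..1, |t ^ θ - 1 / 3| ^ (q / (q - 1))) ^ (1 / (q / (q - 1))) with hKp
  have hKp0 : 0 ≤ Kp :=
    Real.rpow_nonneg (intervalIntegral.integral_nonneg zero_le_one
      fun t _ => Real.rpow_nonneg (abs_nonneg _) _) _
  have habs1 : |(B * I₁ - B * I₂) / 2| ≤ (B/2) * |I₁| + (B/2) * |I₂| := by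
    rw [abs_div, abs_of_pos (by norm_num : (0:ℝ) < 2)]
    have := abs_sub (B * I₁) (B * I₂)
    rw [abs_mul, abs_mul, abs_of_pos hBpos] at this
    linarith
  have hmb4 : m * (b - a) / 4 = B / 2 := by rw [hB]; ring
  calc |(B * I₁ - B * I₂) / 2|
      ≤ (B/2) * |I₁| + (B/2) * |I₂| := habs1
    _ ≤ (B/2) * (Kp * ((|f' c| ^ q + α*m*|f' a| ^ q)/(α+1)) ^ (1/q))
        + (B/2) * (Kp * ((|f' c| ^ q + α*m*|f' b| ^ q)/(α+1)) ^ (1/q)) := by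
        have h1 := mul_le_mul_of_nonneg_left hH1 (by positivity : (0:ℝ) ≤ B/2)
        have h2 := mul_le_mul_of_nonneg_left hH2 (by positivity : (0:ℝ) ≤ B/2)
        exact add_le_add h1 h2
    _ = m * (b - a) / 4 * Kp *
        (((|f' c| ^ q + α * m * |f' a| ^ q) / (α + 1)) ^ (1 / q) +
          ((|f' c| ^ q + α * m * |f' b| ^ q) / (α + 1)) ^ (1 / q)) := by
        rw [hmb4]; ring
end

section
/- Let f : I ⊂ [0,∞) → ℝ be differentiable on I°, m ∈ (0,1], ma, b ∈ I° with a < b, and suppose f' is integrable on [ma, mb]. Suppose |f'|^q is (α,m)-convex on [ma,b] for some fixed q > 1 and (α,m) ∈ [0,1]², and |f'(u)| ≤ M for all u ∈ [ma,b]. Then for every x ∈ [a,b] and θ > 0, with p = q/(q−1), the Ostrowski-type inequality holds: |((x−a)^θ + (b−x)^θ)/(b−a) · f(mx) − (Γ(θ+1)/(m^θ (b−a))) [J_{(mx)−}^θ f(ma) + J_{(mx)+}^θ f(mb)]| ≤ m M (1/(θp+1))^{1/p} ((1+αm)/(α+1))^{1/q} · ((x−a)^{θ+1} + (b−x)^{θ+1})/(b−a).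 -/
open MeasureTheory Set intervalIntegral Real

lemma rpow_weight_intint {c : ℝ} (r : ℝ) (hr : -1 < r) (a b : ℝ) :
    IntervalIntegrable (fun t : ℝ => (t - c) ^ r) volume a b := by
  have h := (intervalIntegrable_rpow' (a := a - c) (b := b - c) hr).comp_sub_right c
  simpa using h

lemma ftc_left (f f' : ℝ → ℝ) (c d θ : ℝ) (hcd : c ≤ d) (hθ : 0 < θ)
    (hcont : ContinuousOn f (Icc c d))
    (hderiv : ∀ t ∈ Ioo c d, HasDerivAt f (f' t) t)
    (hint : IntervalIntegrable f' volume c d) :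
    θ * ∫ t in c..d, (t - c) ^ (θ - 1) * f t
      = (d - c) ^ θ * f d - ∫ t in c..d, (t - c) ^ θ * f' t := by
  set g : ℝ → ℝ := fun t => (t - c) ^ θ * f t with hg
  set G : ℝ → ℝ := fun t => θ * ((t - c) ^ (θ - 1) * f t) + (t - c) ^ θ * f' t with hG
  have hw : ContinuousOn (fun t : ℝ => (t - c) ^ θ) (Icc c d) :=
    ((continuous_id.sub continuous_const).rpow_const (fun x => Or.inr hθ.le)).continuousOn
  have hgc : ContinuousOn g (Icc c d) := hw.mul hcont
  have hI1 : IntervalIntegrable (fun t => (t - c) ^ (θ - 1) * f t) volume c d := by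
    apply (rpow_weight_intint (θ - 1) (by linarith) c d).mul_continuousOn
    rwa [uIcc_of_le hcd]
  have hI2 : IntervalIntegrable (fun t => (t - c) ^ θ * f' t) volume c d := by
    apply hint.continuousOn_mul
    rwa [uIcc_of_le hcd]
  have hGint : IntervalIntegrable G volume c d := (hI1.const_mul θ).add hI2
  have hder : ∀ t ∈ Ioo c d, HasDerivWithinAt g (G t) (Ioi t) t := by
    intro t ht
    have htc : (0:ℝ) < t - c := by linarith [ht.1]
    have h1 : HasDerivAt (fun t : ℝ => (t - c) ^ θ) (θ * (t - c) ^ (θ - 1)) t := by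
      have := (Real.hasDerivAt_rpow_const (x := t - c) (p := θ) (Or.inl htc.ne'))
      have h2 := this.comp t ((hasDerivAt_id t).sub_const c)
      simpa [Function.comp_def] using h2
    have := h1.mul (hderiv t ht)
    apply HasDerivAt.hasDerivWithinAt
    show HasDerivAt ((fun t => (t - c) ^ θ) * f) (θ * ((t - c) ^ (θ - 1) * f t) + (t - c) ^ θ * f' t) t
    exact this.congr_deriv (by ring)
  have hFTC := intervalIntegral.integral_eq_sub_of_hasDeriv_right_of_le hcd hgc hder hGint
  have hzero : g c = 0 := by simp [hg, Real.zero_rpow hθ.ne']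
  have hsplit : ∫ t in c..d, G t
      = θ * (∫ t in c..d, (t - c) ^ (θ - 1) * f t) + ∫ t in c..d, (t - c) ^ θ * f' t := by
    rw [hG, intervalIntegral.integral_add (hI1.const_mul θ) hI2,
      intervalIntegral.integral_const_mul]
  rw [hsplit, hzero, sub_zero] at hFTC
  have : g d = (d - c) ^ θ * f d := rfl
  linarith [hFTC]

lemma ftc_right (f f' : ℝ → ℝ) (c d θ : ℝ) (hcd : c ≤ d) (hθ : 0 < θ)
    (hcont : ContinuousOn f (Icc c d))
    (hderiv : ∀ t ∈ Ioo c d, HasDerivAt f (f' t) t)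
    (hint : IntervalIntegrable f' volume c d) :
    θ * ∫ t in c..d, (d - t) ^ (θ - 1) * f t
      = (d - c) ^ θ * f c + ∫ t in c..d, (d - t) ^ θ * f' t := by
  set g : ℝ → ℝ := fun t => -((d - t) ^ θ * f t) with hg
  set G : ℝ → ℝ := fun t => θ * ((d - t) ^ (θ - 1) * f t) - (d - t) ^ θ * f' t with hG
  have hw : ContinuousOn (fun t : ℝ => (d - t) ^ θ) (Icc c d) :=
    ((continuous_const.sub continuous_id).rpow_const (fun x => Or.inr hθ.le)).continuousOn
  have hgc : ContinuousOn g (Icc c d) := (hw.mul hcont).neg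
  have hI1 : IntervalIntegrable (fun t => (d - t) ^ (θ - 1) * f t) volume c d := by
    have h := (intervalIntegrable_rpow' (a := d - c) (b := d - d)
      (r := θ - 1) (by linarith)).comp_sub_left d
    have h' : IntervalIntegrable (fun t : ℝ => (d - t) ^ (θ - 1)) volume c d := by simpa using h
    apply h'.mul_continuousOn
    rwa [uIcc_of_le hcd]
  have hI2 : IntervalIntegrable (fun t => (d - t) ^ θ * f' t) volume c d := by
    apply hint.continuousOn_mul
    rwa [uIcc_of_le hcd]
  have hGint : IntervalIntegrable G volume c d := (hI1.const_mul θ).sub hI2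
  have hder : ∀ t ∈ Ioo c d, HasDerivWithinAt g (G t) (Ioi t) t := by
    intro t ht
    have htc : (0:ℝ) < d - t := by linarith [ht.2]
    have h1 : HasDerivAt (fun t : ℝ => (d - t) ^ θ) (-(θ * (d - t) ^ (θ - 1))) t := by
      have := (Real.hasDerivAt_rpow_const (x := d - t) (p := θ) (Or.inl htc.ne'))
      have h2 := this.comp t ((hasDerivAt_const t d).sub (hasDerivAt_id t))
      simpa [Function.comp_def] using h2
    have := (h1.mul (hderiv t ht)).neg
    apply HasDerivAt.hasDerivWithinAt
    show HasDerivAt (-((fun t => (d - t) ^ θ) * f)) (θ * ((d - t) ^ (θ - 1) * f t) - (d - t) ^ θ * f' t) t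
    exact this.congr_deriv (by ring)
  have hFTC := intervalIntegral.integral_eq_sub_of_hasDeriv_right_of_le hcd hgc hder hGint
  have hzero : g d = 0 := by simp [hg, Real.zero_rpow hθ.ne']
  have hsplit : ∫ t in c..d, G t
      = θ * (∫ t in c..d, (d - t) ^ (θ - 1) * f t) - ∫ t in c..d, (d - t) ^ θ * f' t := by
    rw [hG, intervalIntegral.integral_sub (hI1.const_mul θ) hI2,
      intervalIntegral.integral_const_mul]
  rw [hsplit, hzero] at hFTC
  have : g c = -((d - c) ^ θ * f c) := rfl
  rw [this] at hFTC
  linarith [hFTC]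

lemma int_rpow_sub (c d r : ℝ) (hr : -1 < r) :
    ∫ t in c..d, (t - c) ^ r = (d - c) ^ (r + 1) / (r + 1) := by
  have h1 : (∫ t in c..d, (t - c) ^ r) = ∫ u in c - c..d - c, u ^ r :=
    intervalIntegral.integral_comp_sub_right (fun u => u ^ r) c
  rw [h1, sub_self, integral_rpow (Or.inl hr), Real.zero_rpow (by linarith : r + 1 ≠ 0)]
  ring

lemma conv_bound (h : ℝ → ℝ) (c d α A B : ℝ) (hcd : c ≤ d) (hα0 : 0 ≤ α)
    (hint : IntervalIntegrable h volume c d)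
    (hpt : ∀ t ∈ Icc c d, h t ≤ A + B * (t - c) ^ α) :
    ∫ t in c..d, h t ≤ A * (d - c) + B * ((d - c) ^ (α + 1) / (α + 1)) := by
  have hint2 : IntervalIntegrable (fun t => A + B * (t - c) ^ α) volume c d :=
    intervalIntegrable_const.add ((rpow_weight_intint α (by linarith) c d).const_mul B)
  have hmono := intervalIntegral.integral_mono_on hcd hint hint2 hpt
  calc ∫ t in c..d, h t ≤ ∫ t in c..d, (A + B * (t - c) ^ α) := hmono
    _ = A * (d - c) + B * ((d - c) ^ (α + 1) / (α + 1)) := by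
        rw [intervalIntegral.integral_add intervalIntegrable_const
          ((rpow_weight_intint α (by linarith) c d).const_mul B),
          intervalIntegral.integral_const, intervalIntegral.integral_const_mul,
          int_rpow_sub c d α (by linarith)]
        simp [smul_eq_mul, mul_comm]

lemma refl_integral (F : ℝ → ℝ) (c d : ℝ) :
    ∫ t in c..d, F (c + d - t) = ∫ t in c..d, F t := by
  have h := intervalIntegral.integral_comp_sub_left (a := c) (b := d) F (c + d)
  simpa using h

lemma refl_intint {F : ℝ → ℝ} {c d : ℝ} (hF : IntervalIntegrable F volume c d) :
    IntervalIntegrable (fun t => F (c + d - t)) volume c d := by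
  have h := (hF.comp_sub_left (c + d)).symm
  simpa using h

lemma conv_bound' (h : ℝ → ℝ) (c d α A B : ℝ) (hcd : c ≤ d) (hα0 : 0 ≤ α)
    (hint : IntervalIntegrable h volume c d)
    (hpt : ∀ t ∈ Icc c d, h t ≤ A + B * (d - t) ^ α) :
    ∫ t in c..d, h t ≤ A * (d - c) + B * ((d - c) ^ (α + 1) / (α + 1)) := by
  rw [← refl_integral h c d]
  apply conv_bound _ c d α A B hcd hα0 (refl_intint hint)
  intro t ht
  have hmem : c + d - t ∈ Icc c d := by
    constructor <;> [linarith [ht.2]; linarith [ht.1]]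
  have := hpt (c + d - t) hmem
  have he : d - (c + d - t) = t - c := by ring
  rwa [he] at this

lemma holder_piece (g : ℝ → ℝ) (c d θ p q K Mg : ℝ) (hcd : c ≤ d) (hθ : 0 < θ)
    (hpq : Real.HolderConjugate p q)
    (hg : IntervalIntegrable g volume c d)
    (hMg : ∀ t ∈ Icc c d, |g t| ≤ Mg)
    (hK : (∫ t in c..d, |g t| ^ q) ≤ K) :
    |∫ t in c..d, (t - c) ^ θ * g t|
      ≤ ((d - c) ^ (θ * p + 1) / (θ * p + 1)) ^ (1/p) * K ^ (1/q) := by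
  set μ := volume.restrict (Ioc c d) with hμ
  have hK0 : 0 ≤ K :=
    le_trans (intervalIntegral.integral_nonneg hcd
      (fun t _ => Real.rpow_nonneg (abs_nonneg _) q)) hK
  have hwmeas : AEStronglyMeasurable (fun t : ℝ => (t - c) ^ θ) μ :=
    ((continuous_id.sub continuous_const).rpow_const
      (fun x => Or.inr hθ.le)).aestronglyMeasurable
  have hwbd : ∀ᵐ t ∂μ, ‖(t - c) ^ θ‖ ≤ (d - c) ^ θ := by
    filter_upwards [ae_restrict_mem measurableSet_Ioc] with t ht
    rw [Real.norm_eq_abs,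
      abs_of_nonneg (Real.rpow_nonneg (by linarith [ht.1] : (0:ℝ) ≤ t - c) θ)]
    exact Real.rpow_le_rpow (by linarith [ht.1]) (by linarith [ht.2]) hθ.le
  have hwLp : MemLp (fun t : ℝ => (t - c) ^ θ) (ENNReal.ofReal p) μ :=
    MemLp.of_bound hwmeas _ hwbd
  have hgmeas : AEStronglyMeasurable g μ := hg.1.aestronglyMeasurable
  have hgbd : ∀ᵐ t ∂μ, ‖g t‖ ≤ Mg := by
    filter_upwards [ae_restrict_mem measurableSet_Ioc] with t ht
    exact hMg t ⟨le_of_lt ht.1, ht.2⟩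
  have hgLq : MemLp g (ENNReal.ofReal q) μ := MemLp.of_bound hgmeas _ hgbd
  have hH := MeasureTheory.integral_mul_norm_le_Lp_mul_Lq hpq hwLp hgLq
  have e1 : (∫ t, ‖(t - c) ^ θ‖ ^ p ∂μ) = (d - c) ^ (θ * p + 1) / (θ * p + 1) := by
    rw [hμ, ← intervalIntegral.integral_of_le hcd, ← int_rpow_sub c d (θ * p)
      (by nlinarith [mul_pos hθ hpq.pos])]
    apply intervalIntegral.integral_congr
    intro t ht
    rw [uIcc_of_le hcd] at ht
    have h0 : (0:ℝ) ≤ t - c := by linarith [ht.1]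
    show ‖(t - c) ^ θ‖ ^ p = (t - c) ^ (θ * p)
    rw [Real.norm_eq_abs, abs_of_nonneg (Real.rpow_nonneg h0 θ), ← Real.rpow_mul h0]
  have e2 : (∫ t, ‖g t‖ ^ q ∂μ) ≤ K := by
    rw [hμ, ← intervalIntegral.integral_of_le hcd]
    simpa [Real.norm_eq_abs] using hK
  have e2' : (0:ℝ) ≤ ∫ t, ‖g t‖ ^ q ∂μ :=
    integral_nonneg (fun t => Real.rpow_nonneg (norm_nonneg _) q)
  calc |∫ t in c..d, (t - c) ^ θ * g t|
      ≤ ∫ t in c..d, |(t - c) ^ θ * g t| :=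
        intervalIntegral.abs_integral_le_integral_abs hcd
    _ = ∫ t, ‖(t - c) ^ θ‖ * ‖g t‖ ∂μ := by
        rw [intervalIntegral.integral_of_le hcd]
        simp [abs_mul, Real.norm_eq_abs, hμ]
    _ ≤ (∫ t, ‖(t - c) ^ θ‖ ^ p ∂μ) ^ (1/p) * (∫ t, ‖g t‖ ^ q ∂μ) ^ (1/q) := hH
    _ ≤ ((d - c) ^ (θ * p + 1) / (θ * p + 1)) ^ (1/p) * K ^ (1/q) := by
        rw [e1]
        exact mul_le_mul_of_nonneg_left
          (Real.rpow_le_rpow e2' e2 (le_of_lt hpq.symm.one_div_pos))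
          (Real.rpow_nonneg (div_nonneg (Real.rpow_nonneg (by linarith) _)
            (by nlinarith [mul_pos hθ hpq.pos])) _)

lemma holder_piece' (g : ℝ → ℝ) (c d θ p q K Mg : ℝ) (hcd : c ≤ d) (hθ : 0 < θ)
    (hpq : Real.HolderConjugate p q)
    (hg : IntervalIntegrable g volume c d)
    (hMg : ∀ t ∈ Icc c d, |g t| ≤ Mg)
    (hK : (∫ t in c..d, |g t| ^ q) ≤ K) :
    |∫ t in c..d, (d - t) ^ θ * g t|
      ≤ ((d - c) ^ (θ * p + 1) / (θ * p + 1)) ^ (1/p) * K ^ (1/q) := by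
  have h1 : (∫ t in c..d, (d - t) ^ θ * g t)
      = ∫ t in c..d, (t - c) ^ θ * g (c + d - t) := by
    rw [← refl_integral (fun t => (t - c) ^ θ * g (c + d - t)) c d]
    apply intervalIntegral.integral_congr
    intro t _
    have e1 : c + d - t - c = d - t := by ring
    have e2 : c + d - (c + d - t) = t := by ring
    simp only [e1, e2]
  have hK' : (∫ t in c..d, |g (c + d - t)| ^ q) ≤ K := by
    rw [show (fun t => |g (c + d - t)| ^ q) = fun t => (fun u => |g u| ^ q) (c + d - t) from rfl,
      refl_integral (fun u => |g u| ^ q) c d]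
    exact hK
  have hMg' : ∀ t ∈ Icc c d, |g (c + d - t)| ≤ Mg := by
    intro t ht
    exact hMg _ ⟨by linarith [ht.2], by linarith [ht.1]⟩
  rw [h1]
  exact holder_piece _ c d θ p q K Mg hcd hθ hpq (refl_intint hg) hMg' hK'

set_option maxHeartbeats 1000000 in
theorem ostrowski_holder
    (I : Set ℝ) (hI : Set.OrdConnected I) (hI0 : I ⊆ Set.Ici (0:ℝ)) (f f' : ℝ → ℝ) (m a b : ℝ)
    (hm : m ∈ Set.Ioc (0:ℝ) 1) (hab : a < b)
    (hma : m * a ∈ interior I) (hb : b ∈ interior I)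
    (hf : ∀ y ∈ interior I, HasDerivAt f (f' y) y)
    (hint : IntervalIntegrable f' MeasureTheory.volume (m * a) (m * b))
    (α q : ℝ) (hα : α ∈ Set.Icc (0:ℝ) 1) (hq : 1 < q)
    (hconv : AlphaMConvexOn α m (m * a) b (fun u => |f' u| ^ q))
    (M : ℝ) (hM : ∀ u ∈ Set.Icc (m * a) b, |f' u| ≤ M) :
    ∀ x ∈ Set.Icc a b, ∀ θ : ℝ, 0 < θ →
      |((x - a) ^ θ + (b - x) ^ θ) / (b - a) * f (m * x) -
          Real.Gamma (θ + 1) / (m ^ θ * (b - a)) *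
            (rlLeft θ (m * a) (m * x) f + rlRight θ (m * x) (m * b) f)| ≤
        m * M * (1 / (θ * (q / (q - 1)) + 1)) ^ (1 / (q / (q - 1))) *
            ((1 + α * m) / (α + 1)) ^ (1 / q) *
          (((x - a) ^ (θ + 1) + (b - x) ^ (θ + 1)) / (b - a)) := by
  obtain ⟨hm0, hm1⟩ := hm
  obtain ⟨hα0, hα1⟩ := hα
  intro x hx θ hθ
  obtain ⟨hax, hxb⟩ := hx
  set p := q / (q - 1) with hp
  have hpq : Real.HolderConjugate p q := (Real.HolderConjugate.conjExponent hq).symm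
  have hq0 : (0:ℝ) < q := by linarith
  have hq0le : (0:ℝ) ≤ q := hq0.le
  have hppos : 0 < p := hpq.pos
  have hθp1 : 0 < θ * p + 1 := by nlinarith [mul_pos hθ hppos]
  have hα1pos : (0:ℝ) < α + 1 := by linarith
  have ha0 : 0 ≤ a := by
    have h1 : (0:ℝ) ≤ m * a := hI0 (interior_subset hma)
    nlinarith
  have hba : (0:ℝ) < b - a := by linarith
  have hmaa : m * a ≤ a := by nlinarith
  have hmax : m * a ≤ m * x := by nlinarith
  have hmxb : m * x ≤ m * b := by nlinarith
  have hmxle : m * x ≤ b := by nlinarith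
  have hmble : m * b ≤ b := by nlinarith
  have hmab : m * a ≤ b := by linarith
  have hsub : Icc (m * a) b ⊆ interior I := by
    intro t ht
    rcases eq_or_lt_of_le ht.1 with h1 | h1
    · rwa [← h1]
    rcases eq_or_lt_of_le ht.2 with h2 | h2
    · rwa [h2]
    have hIcc : Icc (m*a) b ⊆ I := hI.out (interior_subset hma) (interior_subset hb)
    have hIoo : Ioo (m*a) b ⊆ interior I := by
      rw [← interior_Icc]; exact interior_mono hIcc
    exact hIoo ⟨h1, h2⟩
  have hder : ∀ t ∈ Icc (m*a) b, HasDerivAt f (f' t) t := fun t ht => hf t (hsub ht)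
  have hcont : ContinuousOn f (Icc (m*a) b) :=
    fun t ht => (hder t ht).continuousAt.continuousWithinAt
  have hIccL : Icc (m*a) (m*x) ⊆ Icc (m*a) b := Icc_subset_Icc le_rfl hmxle
  have hIccR : Icc (m*x) (m*b) ⊆ Icc (m*a) b := Icc_subset_Icc hmax hmble
  have hintL : IntervalIntegrable f' volume (m*a) (m*x) := by
    apply hint.mono_set
    rw [uIcc_of_le hmax, uIcc_of_le (hmax.trans hmxb)]
    exact Icc_subset_Icc le_rfl hmxb
  have hintR : IntervalIntegrable f' volume (m*x) (m*b) := by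
    apply hint.mono_set
    rw [uIcc_of_le hmxb, uIcc_of_le (hmax.trans hmxb)]
    exact Icc_subset_Icc hmax le_rfl
  set IL := ∫ t in (m*a)..(m*x), (t - m*a) ^ θ * f' t with hIL
  set IR := ∫ t in (m*x)..(m*b), (m*b - t) ^ θ * f' t with hIR
  have EL := ftc_left f f' (m*a) (m*x) θ hmax hθ (hcont.mono hIccL)
      (fun t ht => hder t (hIccL (Ioo_subset_Icc_self ht))) hintL
  have ER := ftc_right f f' (m*x) (m*b) θ hmxb hθ (hcont.mono hIccR)
      (fun t ht => hder t (hIccR (Ioo_subset_Icc_self ht))) hintR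
  have hΓ : Real.Gamma (θ+1) = θ * Real.Gamma θ := Real.Gamma_add_one hθ.ne'
  have hΓpos : 0 < Real.Gamma θ := Real.Gamma_pos_of_pos hθ
  have hmθ : (0:ℝ) < m ^ θ := Real.rpow_pos_of_pos hm0 θ
  have h1 : (m*x - m*a) ^ θ = m^θ * (x-a)^θ := by
    rw [← mul_sub, Real.mul_rpow hm0.le (by linarith)]
  have h2 : (m*b - m*x) ^ θ = m^θ * (b-x)^θ := by
    rw [← mul_sub, Real.mul_rpow hm0.le (by linarith)]
  have hsum : Real.Gamma (θ+1) * (rlLeft θ (m*a) (m*x) f + rlRight θ (m*x) (m*b) f)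
      = m^θ * ((x-a)^θ + (b-x)^θ) * f (m*x) - IL + IR := by
    rw [rlLeft, rlRight, hΓ, mul_add]
    rw [show θ * Real.Gamma θ * (1 / Real.Gamma θ * ∫ t in (m*a)..(m*x), (t - m*a) ^ (θ-1) * f t)
        = θ * ∫ t in (m*a)..(m*x), (t - m*a) ^ (θ-1) * f t by
      field_simp]
    rw [show θ * Real.Gamma θ * (1 / Real.Gamma θ * ∫ t in (m*x)..(m*b), (m*b - t) ^ (θ-1) * f t)
        = θ * ∫ t in (m*x)..(m*b), (m*b - t) ^ (θ-1) * f t by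
      field_simp]
    rw [EL, ER, h1, h2, ← hIL, ← hIR]
    ring
  have hXeq : ((x - a) ^ θ + (b - x) ^ θ) / (b - a) * f (m * x) -
          Real.Gamma (θ + 1) / (m ^ θ * (b - a)) *
            (rlLeft θ (m * a) (m * x) f + rlRight θ (m * x) (m * b) f)
      = (IL - IR) / (m ^ θ * (b - a)) := by
    have e : Real.Gamma (θ+1) / (m ^ θ * (b - a)) *
        (rlLeft θ (m*a) (m*x) f + rlRight θ (m*x) (m*b) f)
        = (m^θ * ((x-a)^θ + (b-x)^θ) * f (m*x) - IL + IR) / (m ^ θ * (b - a)) := by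
      rw [div_mul_eq_mul_div, hsum]
    rw [e]
    field_simp
    ring
  -- nonnegativity facts
  have hM0 : 0 ≤ M := le_trans (abs_nonneg _) (hM (m*a) ⟨le_rfl, hmab⟩)
  have hMq0 : 0 ≤ M ^ q := Real.rpow_nonneg hM0 q
  have hC2 : (0:ℝ) ≤ (1 + α*m)/(α+1) := div_nonneg (by nlinarith) hα1pos.le
  -- integrability of |f'|^q
  have habs : IntervalIntegrable (fun t => |f' t| ^ q) volume (m*a) (m*b) := by
    apply IntervalIntegrable.mono_fun (intervalIntegrable_const (c := M ^ q))
    · exact ((continuous_abs.rpow_const (fun y => Or.inr hq0le)).comp_aestronglyMeasurable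
        (intervalIntegrable_iff.mp hint).aestronglyMeasurable)
    · rw [uIoc_of_le (hmax.trans hmxb)]
      filter_upwards [ae_restrict_mem measurableSet_Ioc] with t ht
      have htm : t ∈ Icc (m*a) b := ⟨ht.1.le, le_trans ht.2 hmble⟩
      rw [Real.norm_eq_abs, Real.norm_eq_abs, abs_of_nonneg (Real.rpow_nonneg (abs_nonneg _) q),
        abs_of_nonneg hMq0]
      exact Real.rpow_le_rpow (abs_nonneg _) (hM t htm) hq0le
  have habsL : IntervalIntegrable (fun t => |f' t| ^ q) volume (m*a) (m*x) := by
    apply habs.mono_set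
    rw [uIcc_of_le hmax, uIcc_of_le (hmax.trans hmxb)]
    exact Icc_subset_Icc le_rfl hmxb
  have habsR : IntervalIntegrable (fun t => |f' t| ^ q) volume (m*x) (m*b) := by
    apply habs.mono_set
    rw [uIcc_of_le hmxb, uIcc_of_le (hmax.trans hmxb)]
    exact Icc_subset_Icc hmax le_rfl
  have hmxmem : m*x ∈ Icc (m*a) b := ⟨hmax, hmxle⟩
  have hamem : a ∈ Icc (m*a) b := ⟨hmaa, by linarith⟩
  have hbmem : b ∈ Icc (m*a) b := ⟨hmab, le_rfl⟩
  have hfmx : |f' (m*x)| ^ q ≤ M ^ q := Real.rpow_le_rpow (abs_nonneg _) (hM _ hmxmem) hq0le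
  have hfa : |f' a| ^ q ≤ M ^ q := Real.rpow_le_rpow (abs_nonneg _) (hM _ hamem) hq0le
  have hfb : |f' b| ^ q ≤ M ^ q := Real.rpow_le_rpow (abs_nonneg _) (hM _ hbmem) hq0le
  set C : ℝ := M * ((1/(θ*p+1))^(1/p) * (((1+α*m)/(α+1))^(1/q))) with hC
  have hC0 : 0 ≤ C := by
    apply mul_nonneg hM0
    exact mul_nonneg (Real.rpow_nonneg (by positivity) _) (Real.rpow_nonneg hC2 _)
  -- the exponent identity
  have hexp : (θ*p+1)*(1/p) + 1/q = θ + 1 := by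
    have h := hpq.inv_add_inv_eq_one
    have e3 : (θ*p+1)*(1/p) = θ + 1/p := by field_simp
    rw [e3, add_assoc, one_div, one_div, h]
  -- generic final algebra
  have halg : ∀ L : ℝ, 0 < L →
      (L ^ (θ*p+1)/(θ*p+1))^(1/p) * (M^q * L * ((1+α*m)/(α+1)))^(1/q) = C * L^(θ+1) := by
    intro L hL0
    have e1 : (L ^ (θ*p+1)/(θ*p+1))^(1/p)
        = L ^ ((θ*p+1)*(1/p)) * (1/(θ*p+1))^(1/p) := by
      rw [div_eq_mul_one_div, Real.mul_rpow (Real.rpow_nonneg hL0.le _) (by positivity),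
        ← Real.rpow_mul hL0.le]
    have e2 : (M^q * L * ((1+α*m)/(α+1)))^(1/q)
        = M * L^(1/q) * ((1+α*m)/(α+1))^(1/q) := by
      rw [Real.mul_rpow (mul_nonneg hMq0 hL0.le) hC2, Real.mul_rpow hMq0 hL0.le,
        ← Real.rpow_mul hM0, mul_one_div, div_self hq0.ne', Real.rpow_one]
    have e4 : L ^ ((θ*p+1)*(1/p)) * L^(1/q) = L^(θ+1) := by
      rw [← Real.rpow_add hL0, hexp]
    rw [e1, e2, hC, ← e4]
    ring
  -- Left bound
  have HL : |IL| ≤ C * (m*(x-a))^(θ+1) := by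
    rcases eq_or_lt_of_le hax with hxa | hxa
    · have hIL0 : IL = 0 := by rw [hIL, ← hxa, intervalIntegral.integral_same]
      rw [hIL0, ← hxa, abs_zero, sub_self, mul_zero,
        Real.zero_rpow (by linarith : θ + 1 ≠ 0), mul_zero]
    · have hL0 : (0:ℝ) < m*(x-a) := mul_pos hm0 (by linarith)
      have hdc : m*x - m*a = m*(x-a) := by ring
      have hLα : (0:ℝ) < (m*(x-a))^α := Real.rpow_pos_of_pos hL0 α
      have hKpt : ∀ t ∈ Icc (m*a) (m*x), |f' t|^q
          ≤ M^q*m + (M^q*(1-m)/(m*(x-a))^α) * (t - m*a)^α := by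
        intro t ht
        set s := (t - m*a)/(m*(x-a)) with hs
        have hs0 : 0 ≤ s := div_nonneg (by linarith [ht.1]) hL0.le
        have hs1 : s ≤ 1 := by
          rw [hs, div_le_one hL0]; linarith [ht.2]
        have hcomb : s * (m*x) + m * (1 - s) * a = t := by
          have : s * (m*(x-a)) = t - m*a := by rw [hs]; exact div_mul_cancel₀ _ hL0.ne'
          linear_combination this
        have htmem : s*(m*x) + m*(1-s)*a ∈ Icc (m*a) b := by
          rw [hcomb]; exact ⟨ht.1, le_trans ht.2 hmxle⟩
        have hcv := hconv (m*x) hmxmem a hamem s ⟨hs0, hs1⟩ htmem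
        simp only at hcv
        rw [hcomb] at hcv
        have hsα1 : s^α ≤ 1 := Real.rpow_le_one hs0 hs1 hα0
        have hsα0 : 0 ≤ s^α := Real.rpow_nonneg hs0 α
        have hseq : s^α = (t - m*a)^α / (m*(x-a))^α := by
          rw [hs, Real.div_rpow (by linarith [ht.1]) hL0.le]
        calc |f' t|^q ≤ s^α * |f' (m*x)|^q + m*(1-s^α)*|f' a|^q := hcv
          _ ≤ s^α * M^q + m*(1-s^α)*M^q :=
              add_le_add (mul_le_mul_of_nonneg_left hfmx hsα0)
                (mul_le_mul_of_nonneg_left hfa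
                  (mul_nonneg hm0.le (by linarith)))
          _ = M^q*m + (M^q*(1-m)) * s^α := by ring
          _ = M^q*m + (M^q*(1-m)/(m*(x-a))^α) * (t - m*a)^α := by
              rw [hseq]; ring
      have hKint := conv_bound (fun t => |f' t|^q) (m*a) (m*x) α
        (M^q*m) (M^q*(1-m)/(m*(x-a))^α) hmax hα0 habsL hKpt
      have hKval : M^q*m*(m*x - m*a) + (M^q*(1-m)/(m*(x-a))^α)
            * ((m*x - m*a)^(α+1)/(α+1))
          = M^q * (m*(x-a)) * ((1+α*m)/(α+1)) := by
        rw [hdc, Real.rpow_add hL0, Real.rpow_one]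
        field_simp
        ring
      have hKfin : (∫ t in (m*a)..(m*x), |f' t|^q)
          ≤ M^q * (m*(x-a)) * ((1+α*m)/(α+1)) := by
        rw [← hKval]; exact hKint
      have hH := holder_piece f' (m*a) (m*x) θ p q
        (M^q * (m*(x-a)) * ((1+α*m)/(α+1))) M hmax hθ hpq hintL
        (fun t ht => hM t (hIccL ht)) hKfin
      rw [hdc] at hH
      rw [← hIL] at hH
      exact le_trans hH (le_of_eq (halg _ hL0))
  -- Right bound
  have HR : |IR| ≤ C * (m*(b-x))^(θ+1) := by
    rcases eq_or_lt_of_le hxb with hxb' | hxb'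
    · have hIR0 : IR = 0 := by rw [hIR, hxb', intervalIntegral.integral_same]
      rw [hIR0, hxb', abs_zero, sub_self, mul_zero,
        Real.zero_rpow (by linarith : θ + 1 ≠ 0), mul_zero]
    · have hL0 : (0:ℝ) < m*(b-x) := mul_pos hm0 (by linarith)
      have hdc : m*b - m*x = m*(b-x) := by ring
      have hLα : (0:ℝ) < (m*(b-x))^α := Real.rpow_pos_of_pos hL0 α
      have hKpt : ∀ t ∈ Icc (m*x) (m*b), |f' t|^q
          ≤ M^q*m + (M^q*(1-m)/(m*(b-x))^α) * (m*b - t)^α := by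
        intro t ht
        set s := (m*b - t)/(m*(b-x)) with hs
        have hs0 : 0 ≤ s := div_nonneg (by linarith [ht.2]) hL0.le
        have hs1 : s ≤ 1 := by
          rw [hs, div_le_one hL0]; linarith [ht.1]
        have hcomb : s * (m*x) + m * (1 - s) * b = t := by
          have : s * (m*(b-x)) = m*b - t := by rw [hs]; exact div_mul_cancel₀ _ hL0.ne'
          linear_combination (-1:ℝ) * this
        have htmem : s*(m*x) + m*(1-s)*b ∈ Icc (m*a) b := by
          rw [hcomb]; exact ⟨le_trans hmax ht.1, le_trans ht.2 hmble⟩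
        have hcv := hconv (m*x) hmxmem b hbmem s ⟨hs0, hs1⟩ htmem
        simp only at hcv
        rw [hcomb] at hcv
        have hsα1 : s^α ≤ 1 := Real.rpow_le_one hs0 hs1 hα0
        have hsα0 : 0 ≤ s^α := Real.rpow_nonneg hs0 α
        have hseq : s^α = (m*b - t)^α / (m*(b-x))^α := by
          rw [hs, Real.div_rpow (by linarith [ht.2]) hL0.le]
        calc |f' t|^q ≤ s^α * |f' (m*x)|^q + m*(1-s^α)*|f' b|^q := hcv
          _ ≤ s^α * M^q + m*(1-s^α)*M^q :=
              add_le_add (mul_le_mul_of_nonneg_left hfmx hsα0)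
                (mul_le_mul_of_nonneg_left hfb
                  (mul_nonneg hm0.le (by linarith)))
          _ = M^q*m + (M^q*(1-m)) * s^α := by ring
          _ = M^q*m + (M^q*(1-m)/(m*(b-x))^α) * (m*b - t)^α := by
              rw [hseq]; ring
      have hKint := conv_bound' (fun t => |f' t|^q) (m*x) (m*b) α
        (M^q*m) (M^q*(1-m)/(m*(b-x))^α) hmxb hα0 habsR hKpt
      have hKval : M^q*m*(m*b - m*x) + (M^q*(1-m)/(m*(b-x))^α)
            * ((m*b - m*x)^(α+1)/(α+1))
          = M^q * (m*(b-x)) * ((1+α*m)/(α+1)) := by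
        rw [hdc, Real.rpow_add hL0, Real.rpow_one]
        field_simp
        ring
      have hKfin : (∫ t in (m*x)..(m*b), |f' t|^q)
          ≤ M^q * (m*(b-x)) * ((1+α*m)/(α+1)) := by
        rw [← hKval]; exact hKint
      have hH := holder_piece' f' (m*x) (m*b) θ p q
        (M^q * (m*(b-x)) * ((1+α*m)/(α+1))) M hmxb hθ hpq hintR
        (fun t ht => hM t (hIccR ht)) hKfin
      rw [hdc] at hH
      rw [← hIR] at hH
      exact le_trans hH (le_of_eq (halg _ hL0))
  -- assemble
  have hmθ1 : (m*(x-a))^(θ+1) = m^θ * m * (x-a)^(θ+1) := by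
    rw [Real.mul_rpow hm0.le (by linarith), Real.rpow_add hm0, Real.rpow_one]
  have hmθ2 : (m*(b-x))^(θ+1) = m^θ * m * (b-x)^(θ+1) := by
    rw [Real.mul_rpow hm0.le (by linarith), Real.rpow_add hm0, Real.rpow_one]
  calc |((x - a) ^ θ + (b - x) ^ θ) / (b - a) * f (m * x) -
          Real.Gamma (θ + 1) / (m ^ θ * (b - a)) *
            (rlLeft θ (m * a) (m * x) f + rlRight θ (m * x) (m * b) f)|
      = |IL - IR| / (m^θ * (b-a)) := by
        rw [hXeq, abs_div, abs_of_pos (mul_pos hmθ hba)]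
    _ ≤ (|IL| + |IR|) / (m^θ * (b-a)) := by
        gcongr
        exact abs_sub IL IR
    _ ≤ (C * (m*(x-a))^(θ+1) + C * (m*(b-x))^(θ+1)) / (m^θ * (b-a)) := by
        gcongr
    _ = m * M * (1 / (θ * p + 1)) ^ (1 / p) * ((1 + α * m) / (α + 1)) ^ (1 / q) *
          (((x - a) ^ (θ + 1) + (b - x) ^ (θ + 1)) / (b - a)) := by
        rw [hmθ1, hmθ2, hC]
        field_simp
end
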